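/- arXiv:1904.00709 — 13 statements merged into one kernel-verified Lean document; each statement's English description precedes it below -/
import Mathlib

section
/- Let V be a real normed vector space, let k ≥ 0, let F : V → ℝ be a C^∞ function, and let S ⊆ V be a set such that for every m ∈ S and every j with 0 ≤ j ≤ k the j-th iterated Fréchet derivative of F vanishes at m. Then for any m ∈ S the value of the iterated directional derivative (X₁·(X₂·(⋯(X_{k+1}·F))))(m) depends only on the values X₁(m), …, X_{k+1}(m): if Y₁, …, Y_{k+1} : V → V are C^∞ vector fields with X_i(m) = Y_i(m) for all i, then (X₁·(⋯(X_{k+1}·F)))(m) = (Y₁·(⋯(Y_{k+1}·F)))(m). -/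
/-- Directional derivative of `g : V → ℝ` along the vector field `X : V → V`:
`(X·g)(p) = Dg(p)(X(p))`. -/
noncomputable def dirDeriv {V : Type*} [NormedAddCommGroup V] [NormedSpace ℝ V]
    (X : V → V) (g : V → ℝ) : V → ℝ :=
  fun p => fderiv ℝ g p (X p)

/-- Iterated directional derivative: `dirDerivList [X₁, …, Xₙ] g = X₁·(X₂·(⋯(Xₙ·g)))`. -/
noncomputable def dirDerivList {V : Type*} [NormedAddCommGroup V] [NormedSpace ℝ V] :
    List (V → V) → (V → ℝ) → (V → ℝ)
  | [], g => g
  | X :: L, g => dirDeriv X (dirDerivList L g)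

namespace IteratedDirAux

variable {V : Type*} [NormedAddCommGroup V] [NormedSpace ℝ V]

/-- A "term": the `j`-th derivative of `F` evaluated on `j` vector fields. -/
noncomputable def term (F : V → ℝ) (t : (j : ℕ) × (Fin j → V → V)) : V → ℝ :=
  fun p => iteratedFDeriv ℝ t.1 F p (fun i => t.2 i p)

/-- Sum of a list of terms. -/
noncomputable def termSum (F : V → ℝ) (T : List ((j : ℕ) × (Fin j → V → V))) : V → ℝ :=
  fun p => (T.map (fun t => term F t p)).sum

def SmoothT (t : (j : ℕ) × (Fin j → V → V)) : Prop := ∀ i, ContDiff ℝ (⊤ : ℕ∞) (t.2 i)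

lemma termSum_cons (F : V → ℝ) (t) (T) (p : V) :
    termSum F (t :: T) p = term F t p + termSum F T p := rfl

lemma termSum_append (F : V → ℝ) (A B) (p : V) :
    termSum F (A ++ B) p = termSum F A p + termSum F B p := by
  simp [termSum]

lemma term_hasFDerivAt (F : V → ℝ) (hF : ContDiff ℝ (⊤ : ℕ∞) F)
    (j : ℕ) (w : Fin j → V → V) (hw : ∀ i, ContDiff ℝ (⊤ : ℕ∞) (w i)) (p : V) :
    HasFDerivAt (fun q => iteratedFDeriv ℝ j F q (fun i => w i q))
      ((((ContinuousLinearMap.id ℝ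
            (ContinuousMultilinearMap ℝ (fun _ : Fin j => V) ℝ)).flipMultilinear
          (fun i => w i p)) ∘L (fderiv ℝ (iteratedFDeriv ℝ j F) p)) +
        ∑ i, (((iteratedFDeriv ℝ j F p).toContinuousLinearMap (fun i' => w i' p) i) ∘L
          fderiv ℝ (w i) p)) p := by
  have ha : HasFDerivAt (iteratedFDeriv ℝ j F) (fderiv ℝ (iteratedFDeriv ℝ j F) p) p :=
    (((hF.iteratedFDeriv_right (m := (⊤ : ℕ∞)) (by exact_mod_cast le_top)).differentiable
      (by simp)) p).hasFDerivAt
  have hb : ∀ i, HasFDerivAt (w i) (fderiv ℝ (w i) p) p :=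
    fun i => (((hw i).differentiable (by simp)) p).hasFDerivAt
  exact ha.linear_multilinear_comp hb (ContinuousLinearMap.id ℝ _)

lemma term_differentiable (F : V → ℝ) (hF : ContDiff ℝ (⊤ : ℕ∞) F)
    (t : (j : ℕ) × (Fin j → V → V)) (ht : SmoothT t) : Differentiable ℝ (term F t) :=
  fun p => (term_hasFDerivAt F hF t.1 t.2 ht p).differentiableAt

lemma termSum_differentiable (F : V → ℝ) (hF : ContDiff ℝ (⊤ : ℕ∞) F)
    (T : List ((j : ℕ) × (Fin j → V → V))) (hT : ∀ t ∈ T, SmoothT t) :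
    Differentiable ℝ (termSum F T) := by
  induction T with
  | nil => exact differentiable_const 0
  | cons t T ih =>
      have : termSum F (t :: T) = fun p => term F t p + termSum F T p := rfl
      rw [this]
      exact (term_differentiable F hF t (hT t (by simp))).add
        (ih (fun t' ht' => hT t' (by simp [ht'])))

/-- The expansion of `dirDeriv X` applied to a term. -/
noncomputable def expandTerm (X : V → V) (t : (j : ℕ) × (Fin j → V → V)) :
    List ((j : ℕ) × (Fin j → V → V)) :=
  ⟨t.1 + 1, Fin.cons X t.2⟩ ::
    List.ofFn (fun i : Fin t.1 =>
      ⟨t.1, Function.update t.2 i (fun q => fderiv ℝ (t.2 i) q (X q))⟩)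

lemma expandTerm_bound (X : V → V) (t) : ∀ t' ∈ expandTerm X t, t'.1 ≤ t.1 + 1 := by
  intro t' ht'
  rcases List.mem_cons.mp ht' with h | h
  · subst h; rfl
  · obtain ⟨i, hi⟩ := List.mem_ofFn.mp h
    subst hi
    exact Nat.le_succ _

lemma smooth_update (j : ℕ) (w : Fin j → V → V) (hw : ∀ i, ContDiff ℝ (⊤ : ℕ∞) (w i))
    (X : V → V) (hX : ContDiff ℝ (⊤ : ℕ∞) X) (i : Fin j) :
    SmoothT ⟨j, Function.update w i (fun q => fderiv ℝ (w i) q (X q))⟩ := by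
  intro i'
  show ContDiff ℝ (⊤ : ℕ∞) (Function.update w i (fun q => fderiv ℝ (w i) q (X q)) i')
  by_cases hne : i' = i
  · rw [hne, Function.update_self]
    exact (((hw i).fderiv_right (m := (⊤ : ℕ∞)) (by exact_mod_cast le_top))).clm_apply hX
  · rw [Function.update_of_ne hne]
    exact hw i'

lemma expandTerm_smooth (X : V → V) (hX : ContDiff ℝ (⊤ : ℕ∞) X) (t) (ht : SmoothT t) :
    ∀ t' ∈ expandTerm X t, SmoothT t' := by
  intro t' ht'
  rcases List.mem_cons.mp ht' with h | h
  · subst h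
    intro i
    refine Fin.cases ?_ (fun i' => ?_) i
    · simpa using hX
    · simpa using ht i'
  · obtain ⟨i, hi⟩ := List.mem_ofFn.mp h
    subst hi
    exact smooth_update t.1 t.2 ht X hX i

lemma dirDeriv_term (F : V → ℝ) (hF : ContDiff ℝ (⊤ : ℕ∞) F)
    (j : ℕ) (w : Fin j → V → V) (hw : ∀ i, ContDiff ℝ (⊤ : ℕ∞) (w i)) (X : V → V) :
    dirDeriv X (term F ⟨j, w⟩) = termSum F (expandTerm X ⟨j, w⟩) := by
  funext p
  show fderiv ℝ (term F ⟨j, w⟩) p (X p) = termSum F (expandTerm X ⟨j, w⟩) p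
  have hfd : fderiv ℝ (term F ⟨j, w⟩) p =
      ((((ContinuousLinearMap.id ℝ
            (ContinuousMultilinearMap ℝ (fun _ : Fin j => V) ℝ)).flipMultilinear
          (fun i => w i p)) ∘L (fderiv ℝ (iteratedFDeriv ℝ j F) p)) +
        ∑ i, (((iteratedFDeriv ℝ j F p).toContinuousLinearMap (fun i' => w i' p) i) ∘L
          fderiv ℝ (w i) p)) :=
    (term_hasFDerivAt F hF j w hw p).fderiv
  rw [hfd]
  have harg : (fun i => (Fin.cons X w : Fin (j + 1) → V → V) i p) = Fin.cons (X p) (fun i => w i p) := by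
    funext i
    refine Fin.cases ?_ (fun i' => ?_) i <;> simp
  have hupr : ∀ i : Fin j,
      (fun i' => Function.update w i (fun q => fderiv ℝ (w i) q (X q)) i' p)
        = Function.update (fun i' => w i' p) i (fderiv ℝ (w i) p (X p)) := by
    intro i
    funext i'
    exact Function.apply_update (fun _ g => g p) w i _ i'
  have hRHS : termSum F (expandTerm X ⟨j, w⟩) p
      = iteratedFDeriv ℝ (j + 1) F p (fun i => (Fin.cons X w : Fin (j + 1) → V → V) i p)
        + ∑ i : Fin j, iteratedFDeriv ℝ j F p
            (fun i' => Function.update w i (fun q => fderiv ℝ (w i) q (X q)) i' p) := by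
    simp only [expandTerm, termSum, term, List.map_cons, List.map_ofFn, List.sum_cons,
      List.sum_ofFn, Function.comp]
  rw [hRHS, harg]
  simp only [ContinuousLinearMap.add_apply, ContinuousLinearMap.coe_comp', Function.comp_apply,
    ContinuousLinearMap.sum_apply, ContinuousLinearMap.flipMultilinear_apply_apply,
    ContinuousLinearMap.id_apply, ContinuousMultilinearMap.toContinuousLinearMap_apply]
  congr 1
  exact Finset.sum_congr rfl (fun i _ => by rw [hupr i])

lemma dirDeriv_termSum (F : V → ℝ) (hF : ContDiff ℝ (⊤ : ℕ∞) F)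
    (T : List ((j : ℕ) × (Fin j → V → V))) (hT : ∀ t ∈ T, SmoothT t) (X : V → V) :
    dirDeriv X (termSum F T) = termSum F (T.flatMap (expandTerm X)) := by
  induction T with
  | nil =>
      funext p
      show fderiv ℝ (termSum F []) p (X p) = _
      have : termSum F ([] : List ((j : ℕ) × (Fin j → V → V))) = fun _ => (0 : ℝ) := rfl
      rw [this, fderiv_fun_const]
      simp [termSum]
  | cons t T ih =>
      have h1 : SmoothT t := hT t (by simp)
      have h2 : ∀ t' ∈ T, SmoothT t' := fun t' ht' => hT t' (by simp [ht'])
      funext p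
      show fderiv ℝ (termSum F (t :: T)) p (X p) = _
      have hadd : fderiv ℝ (termSum F (t :: T)) p
          = fderiv ℝ (term F t) p + fderiv ℝ (termSum F T) p := by
        exact fderiv_add (term_differentiable F hF t h1 p) (termSum_differentiable F hF T h2 p)
      rw [hadd, ContinuousLinearMap.add_apply]
      have e1 : fderiv ℝ (term F t) p (X p) = termSum F (expandTerm X t) p :=
        congrFun (dirDeriv_term F hF t.1 t.2 h1 X) p
      have e2 : fderiv ℝ (termSum F T) p (X p) = termSum F (T.flatMap (expandTerm X)) p :=
        congrFun (ih h2) p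
      rw [e1, e2, List.flatMap_cons, termSum_append]

/-- The key expansion lemma. -/
lemma expand (F : V → ℝ) (hF : ContDiff ℝ (⊤ : ℕ∞) F) :
    ∀ (n : ℕ) (W : Fin n → V → V), (∀ i, ContDiff ℝ (⊤ : ℕ∞) (W i)) →
    ∃ T : List ((j : ℕ) × (Fin j → V → V)),
      (∀ t ∈ T, t.1 < n ∧ SmoothT t) ∧
      dirDerivList (List.ofFn W) F = termSum F (⟨n, W⟩ :: T) := by
  intro n
  induction n with
  | zero =>
      intro W _
      refine ⟨[], by simp, ?_⟩
      funext p
      rw [List.ofFn_zero]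
      show F p = termSum F [⟨0, W⟩] p
      simp [termSum, term, iteratedFDeriv_zero_apply]
  | succ n ih =>
      intro W hW
      obtain ⟨T, hT, hE⟩ := ih (Fin.tail W) (fun i => hW i.succ)
      have hsm : ∀ t ∈ (⟨n, Fin.tail W⟩ : (j : ℕ) × (Fin j → V → V)) :: T, SmoothT t := by
        intro t ht
        rcases List.mem_cons.mp ht with h | h
        · subst h; exact fun i => hW i.succ
        · exact (hT t h).2
      have key : dirDerivList (List.ofFn W) F
          = termSum F (((⟨n, Fin.tail W⟩ : (j : ℕ) × (Fin j → V → V)) :: T).flatMap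
              (expandTerm (W 0))) := by
        rw [List.ofFn_succ]
        show dirDeriv (W 0) (dirDerivList (List.ofFn (Fin.tail W)) F) = _
        rw [hE]
        exact dirDeriv_termSum F hF _ hsm (W 0)
      rw [List.flatMap_cons] at key
      have hhead : expandTerm (W 0) ⟨n, Fin.tail W⟩
          = ⟨n + 1, W⟩ :: List.ofFn (fun i : Fin n =>
              ⟨n, Function.update (Fin.tail W) i
                (fun q => fderiv ℝ (Fin.tail W i) q (W 0 q))⟩) := by
        rw [expandTerm]
        dsimp only
        rw [Fin.cons_self_tail]
      rw [hhead] at key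
      refine ⟨List.ofFn (fun i : Fin n =>
          ⟨n, Function.update (Fin.tail W) i (fun q => fderiv ℝ (Fin.tail W i) q (W 0 q))⟩)
        ++ T.flatMap (expandTerm (W 0)), ?_, by simpa [List.cons_append] using key⟩
      intro t ht
      rcases List.mem_append.mp ht with h | h
      · obtain ⟨i, hi⟩ := List.mem_ofFn.mp h
        subst hi
        exact ⟨Nat.lt_succ_self n, smooth_update n (Fin.tail W) (fun i => hW i.succ) (W 0) (hW 0) i⟩
      · obtain ⟨t', ht', htt⟩ := List.mem_flatMap.mp h
        constructor
        · exact lt_of_le_of_lt (expandTerm_bound (W 0) t' _ htt)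
            (Nat.succ_lt_succ (hT t' ht').1)
        · exact expandTerm_smooth (W 0) (hW 0) t' (hT t' ht').2 _ htt

end IteratedDirAux

/-- If `F` is `C^∞` and all its iterated Fréchet derivatives of order `≤ k` vanish on `S`,
then the `(k+1)`-fold iterated directional derivative of `F` at a point `m ∈ S` depends
only on the values of the vector fields at `m`. -/
theorem iterated_dirDeriv_tensorial
    {V : Type*} [NormedAddCommGroup V] [NormedSpace ℝ V]
    (k : ℕ) (F : V → ℝ) (hF : ContDiff ℝ (⊤ : ℕ∞) F) (S : Set V)
    (hS : ∀ m ∈ S, ∀ j ≤ k, iteratedFDeriv ℝ j F m = 0)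
    (X Y : Fin (k + 1) → V → V)
    (hX : ∀ i, ContDiff ℝ (⊤ : ℕ∞) (X i)) (hY : ∀ i, ContDiff ℝ (⊤ : ℕ∞) (Y i))
    (m : V) (hm : m ∈ S) (hXY : ∀ i, X i m = Y i m) :
    dirDerivList (List.ofFn X) F m = dirDerivList (List.ofFn Y) F m := by
  classical
  obtain ⟨T, hT, hE⟩ := IteratedDirAux.expand F hF (k + 1) X hX
  obtain ⟨T', hT', hE'⟩ := IteratedDirAux.expand F hF (k + 1) Y hY
  have zsum : ∀ (T₀ : List ((j : ℕ) × (Fin j → V → V))), (∀ t ∈ T₀, t.1 < k + 1) →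
      IteratedDirAux.termSum F T₀ m = 0 := by
    intro T₀ h₀
    apply List.sum_eq_zero
    intro x hx
    obtain ⟨t, ht, hxt⟩ := List.mem_map.mp hx
    subst hxt
    show iteratedFDeriv ℝ t.1 F m (fun i => t.2 i m) = 0
    rw [hS m hm t.1 (Nat.lt_succ_iff.mp (h₀ t ht))]
    rfl
  have e1 : dirDerivList (List.ofFn X) F m
      = IteratedDirAux.term F ⟨k + 1, X⟩ m + IteratedDirAux.termSum F T m := by
    rw [congrFun hE m, IteratedDirAux.termSum_cons]
  have e2 : dirDerivList (List.ofFn Y) F m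
      = IteratedDirAux.term F ⟨k + 1, Y⟩ m + IteratedDirAux.termSum F T' m := by
    rw [congrFun hE' m, IteratedDirAux.termSum_cons]
  rw [e1, e2, zsum T (fun t ht => (hT t ht).1), zsum T' (fun t ht => (hT' t ht).1)]
  have hval : (fun i => X i m) = fun i => Y i m := funext hXY
  show iteratedFDeriv ℝ (k + 1) F m (fun i => X i m) + 0
      = iteratedFDeriv ℝ (k + 1) F m (fun i => Y i m) + 0
  rw [hval]
end

section
/- Let V be a real normed vector space, let k ≥ 0, and let F : V × V → ℝ be a C^∞ function such that for every x ∈ V and every j with 0 ≤ j ≤ k the j-th iterated Fréchet derivative of F vanishes at the diagonal point (x,x). Then the (k+1)-st Fréchet derivative of F at any diagonal point annihilates vectors tangent to the diagonal: for every x, u ∈ V and every ξ₂, …, ξ_{k+1} ∈ V × V one has D^{k+1}F(x,x)((u,u), ξ₂, …, ξ_{k+1}) = 0. -/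
/-- If all iterated Fréchet derivatives of `F : V × V → ℝ` of order `≤ k` vanish on the
diagonal, then the `(k+1)`-st derivative at a diagonal point annihilates vectors tangent
to the diagonal, i.e. vectors of the form `(u, u)`. -/
theorem iteratedFDeriv_diag_vanishes_on_diagonal_tangent
    {V : Type*} [NormedAddCommGroup V] [NormedSpace ℝ V]
    (k : ℕ) (F : V × V → ℝ) (hF : ContDiff ℝ (⊤ : ℕ∞) F)
    (hvanish : ∀ x : V, ∀ j ≤ k, iteratedFDeriv ℝ j F (x, x) = 0)
    (x u : V) (ξ : Fin k → V × V) :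
    iteratedFDeriv ℝ (k + 1) F (x, x) (Fin.cons (u, u) ξ) = 0 := by
  have hd : Differentiable ℝ (iteratedFDeriv ℝ k F) :=
    hF.differentiable_iteratedFDeriv (by exact_mod_cast WithTop.coe_lt_top k)
  set L : V →L[ℝ] V × V :=
    (ContinuousLinearMap.id ℝ V).prod (ContinuousLinearMap.id ℝ V) with hL
  have hLx : L x = (x, x) := rfl
  have hcomp : HasFDerivAt ((iteratedFDeriv ℝ k F) ∘ L)
      ((fderiv ℝ (iteratedFDeriv ℝ k F) (x, x)).comp L) x := by
    have hfL : HasFDerivAt L L x := L.hasFDerivAt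
    have hg : HasFDerivAt (iteratedFDeriv ℝ k F)
        (fderiv ℝ (iteratedFDeriv ℝ k F) (x, x)) (L x) := (hd (x, x)).hasFDerivAt
    exact hg.comp x hfL
  have hzero : ((iteratedFDeriv ℝ k F) ∘ L) =
      fun _ => (0 : ContinuousMultilinearMap ℝ (fun _ : Fin k => V × V) ℝ) := by
    funext y
    exact hvanish y k le_rfl
  rw [hzero] at hcomp
  have h0 : HasFDerivAt (fun _ : V =>
      (0 : ContinuousMultilinearMap ℝ (fun _ : Fin k => V × V) ℝ))
      (0 : V →L[ℝ] ContinuousMultilinearMap ℝ (fun _ : Fin k => V × V) ℝ) x :=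
    hasFDerivAt_const (0 : ContinuousMultilinearMap ℝ (fun _ : Fin k => V × V) ℝ) x
  have heq := hcomp.unique h0
  have hval : fderiv ℝ (iteratedFDeriv ℝ k F) (x, x) (u, u) = 0 := by
    have := congrArg (fun T => T u) heq
    simpa [show L u = (u, u) from rfl] using this
  rw [iteratedFDeriv_succ_apply_left]
  simp [Fin.tail_cons, hval]
end

section
/- Let V be a real normed vector space and let F : V × V → ℝ be a contrast function. Then for every x, u, v ∈ V the second Fréchet derivative of F at the diagonal satisfies D²F(x,x)((u,0),(v,0)) = D²F(x,x)((0,u),(0,v)) = −D²F(x,x)((u,0),(0,v)). -/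
lemma contrast_key
    {V : Type*} [NormedAddCommGroup V] [NormedSpace ℝ V]
    (F : V × V → ℝ) (hF : ContDiff ℝ (⊤ : ℕ∞) F)
    (hdF : ∀ x : V, fderiv ℝ F (x, x) = 0)
    (x w : V) :
    fderiv ℝ (fderiv ℝ F) (x, x) (w, w) = 0 := by
  have hdiff : Differentiable ℝ (fderiv ℝ F) :=
    (hF.fderiv_right (m := ((⊤:ℕ∞) : WithTop ℕ∞))
      (by exact_mod_cast (by simp : (⊤:ℕ∞) + 1 ≤ ⊤))).differentiable
      (by simp)
  have hδ : HasFDerivAt (fun y : V => (y, y))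
      ((ContinuousLinearMap.id ℝ V).prod (ContinuousLinearMap.id ℝ V)) x :=
    HasFDerivAt.prodMk (hasFDerivAt_id (𝕜 := ℝ) x) (hasFDerivAt_id (𝕜 := ℝ) x)
  have h1 : HasFDerivAt (fun y : V => fderiv ℝ F (y, y))
      ((fderiv ℝ (fderiv ℝ F) (x, x)).comp
        ((ContinuousLinearMap.id ℝ V).prod (ContinuousLinearMap.id ℝ V))) x :=
    HasFDerivAt.comp (f := fun y : V => (y, y)) (g := fderiv ℝ F) x
      ((hdiff (x, x)).hasFDerivAt) hδ
  have h2 : HasFDerivAt (fun y : V => fderiv ℝ F (y, y)) (0 : V →L[ℝ] (V × V →L[ℝ] ℝ)) x := by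
    simp only [hdF]
    exact hasFDerivAt_const (𝕜 := ℝ) (0 : V × V →L[ℝ] ℝ) x
  have h3 := h1.unique h2
  have := congrArg (fun L => L w) h3
  simpa using this

/-- For a contrast function `F` on the pair groupoid `V × V` (a `C^∞` function vanishing
on the diagonal together with its first derivative), the second derivative at a diagonal
point satisfies `D²F(x,x)((u,0),(v,0)) = D²F(x,x)((0,u),(0,v)) = −D²F(x,x)((u,0),(0,v))`. -/
theorem contrast_secondDeriv_relations
    {V : Type*} [NormedAddCommGroup V] [NormedSpace ℝ V]
    (F : V × V → ℝ) (hF : ContDiff ℝ (⊤ : ℕ∞) F)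
    (hF0 : ∀ x : V, F (x, x) = 0) (hdF : ∀ x : V, fderiv ℝ F (x, x) = 0)
    (x u v : V) :
    iteratedFDeriv ℝ 2 F (x, x) ![(u, 0), (v, 0)]
        = iteratedFDeriv ℝ 2 F (x, x) ![(0, u), (0, v)] ∧
      iteratedFDeriv ℝ 2 F (x, x) ![(u, 0), (v, 0)]
        = -iteratedFDeriv ℝ 2 F (x, x) ![(u, 0), (0, v)] := by
  set B := fderiv ℝ (fderiv ℝ F) (x, x) with hB
  have hsymm : ∀ a b : V × V, B a b = B b a := by
    intro a b
    exact (hF.contDiffAt.isSymmSndFDerivAt (n := ((⊤:ℕ∞) : WithTop ℕ∞)) (by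
      have : ((2:ℕ∞) : WithTop ℕ∞) ≤ ((⊤:ℕ∞) : WithTop ℕ∞) :=
        by exact_mod_cast (le_top : (2:ℕ∞) ≤ ⊤)
      simpa using this)) a b
  have key : ∀ w : V, ∀ z : V × V, B (w, w) z = 0 := by
    intro w z
    have := contrast_key F hF hdF x w
    rw [← hB] at this
    simp [this]
  -- expansion lemmas
  have hfst : ∀ (a : V) (z : V × V), B (a, 0) z = - B (0, a) z := by
    intro a z
    have h : B ((a, 0) + (0, a)) z = 0 := by
      simpa using key a z
    rw [B.map_add, ContinuousLinearMap.add_apply] at h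
    linarith
  have hsnd : ∀ (z : V × V) (a : V), B z (a, 0) = - B z (0, a) := by
    intro z a
    have h : B z ((a, 0) + (0, a)) = 0 := by
      rw [hsymm]
      simpa using key a z
    rw [(B z).map_add] at h
    linarith
  have e2 : iteratedFDeriv ℝ 2 F (x, x) ![(u, 0), (v, 0)] = B (u, 0) (v, 0) := by
    rw [iteratedFDeriv_two_apply]; rfl
  have e3 : iteratedFDeriv ℝ 2 F (x, x) ![(0, u), (0, v)] = B (0, u) (0, v) := by
    rw [iteratedFDeriv_two_apply]; rfl
  have e4 : iteratedFDeriv ℝ 2 F (x, x) ![(u, 0), (0, v)] = B (u, 0) (0, v) := by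
    rw [iteratedFDeriv_two_apply]; rfl
  constructor
  · rw [e2, e3]
    calc B (u, 0) (v, 0) = - B (0, u) (v, 0) := hfst u (v, 0)
      _ = - B (v, 0) (0, u) := by rw [hsymm]
      _ = B (0, v) (0, u) := by rw [hfst v (0, u)]; ring
      _ = B (0, u) (0, v) := hsymm _ _
  · rw [e2, e4]
    have := hsnd (u, 0) v
    linarith
end

section
/- Let V be a real normed vector space and let F : V × V → ℝ be a contrast function. Define F* : V × V → ℝ by F*(x,y) := F(y,x). Then F* is also a contrast function (F*(x,x) = 0 and DF*(x,x) = 0 for all x), and the induced metric tensors coincide: for all x, u, v ∈ V, D²F*(x,x)((0,u),(0,v)) = D²F(x,x)((0,u),(0,v)). -/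
/-- If `F` is a contrast function on the pair groupoid `V × V`, then so is
`F* = F ∘ inv`, where `inv(x,y) = (y,x)`, and the induced metric tensors coincide:
`g^{F*} = g^F`. -/
theorem contrast_inv_is_contrast_and_same_metric
    {V : Type*} [NormedAddCommGroup V] [NormedSpace ℝ V]
    (F : V × V → ℝ) (hF : ContDiff ℝ (⊤ : ℕ∞) F)
    (hF0 : ∀ x : V, F (x, x) = 0) (hdF : ∀ x : V, fderiv ℝ F (x, x) = 0) :
    ContDiff ℝ (⊤ : ℕ∞) (fun p : V × V => F (p.2, p.1)) ∧
      (∀ x : V, (fun p : V × V => F (p.2, p.1)) (x, x) = 0) ∧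
      (∀ x : V, fderiv ℝ (fun p : V × V => F (p.2, p.1)) (x, x) = 0) ∧
      (∀ x u v : V,
        iteratedFDeriv ℝ 2 (fun p : V × V => F (p.2, p.1)) (x, x) ![(0, u), (0, v)]
          = iteratedFDeriv ℝ 2 F (x, x) ![(0, u), (0, v)]) := by
  let e : (V × V) ≃L[ℝ] (V × V) := ContinuousLinearEquiv.prodComm ℝ V V
  have hdiff : Differentiable ℝ F := hF.differentiable (by simp)
  have hC1 : ContDiff ℝ (⊤ : ℕ∞) (fderiv ℝ F) := hF.fderiv_right (by simp)
  refine ⟨hF.comp (contDiff_snd.prodMk contDiff_fst), fun x => hF0 x, ?_, ?_⟩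
  · intro x
    have h1 : fderiv ℝ (F ∘ ⇑e) (x, x) = (fderiv ℝ F (e (x, x))).comp (e : (V × V) →L[ℝ] (V × V)) :=
      e.comp_right_fderiv
    have he : e (x, x) = (x, x) := rfl
    rw [he, hdF x, ContinuousLinearMap.zero_comp] at h1
    exact h1
  · intro x u v
    set B := fderiv ℝ (fderiv ℝ F) (x, x) with hBdef
    have hB : HasFDerivAt (fderiv ℝ F) B (x, x) :=
      (hC1.differentiable (by simp) (x, x)).hasFDerivAt
    -- B vanishes on diagonal vectors in the first slot
    have hdiag : ∀ z : V, B (z, z) = 0 := by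
      intro z
      have hd : HasFDerivAt (fun y : V => ((y, y) : V × V))
          ((ContinuousLinearMap.id ℝ V).prod (ContinuousLinearMap.id ℝ V)) x :=
        (hasFDerivAt_id x).prodMk (hasFDerivAt_id x)
      have hcomp : HasFDerivAt ((fderiv ℝ F) ∘ fun y : V => ((y, y) : V × V))
          (B.comp ((ContinuousLinearMap.id ℝ V).prod (ContinuousLinearMap.id ℝ V))) x :=
        HasFDerivAt.comp (g := fderiv ℝ F) (f := fun y : V => ((y, y) : V × V)) x hB hd
      have hzero : HasFDerivAt ((fderiv ℝ F) ∘ fun y : V => ((y, y) : V × V))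
          (0 : V →L[ℝ] ((V × V) →L[ℝ] ℝ)) x := by
        have heq : ((fderiv ℝ F) ∘ fun y : V => ((y, y) : V × V))
            = fun _ => (0 : (V × V) →L[ℝ] ℝ) := funext fun y => hdF y
        rw [heq]
        exact hasFDerivAt_const _ _
      have h0 := hcomp.unique hzero
      calc B (z, z) = (B.comp ((ContinuousLinearMap.id ℝ V).prod
              (ContinuousLinearMap.id ℝ V))) z := rfl
        _ = 0 := by rw [h0]; rfl
    have hsymm : ∀ a b : V × V, B a b = B b a :=
      second_derivative_symmetric (fun y => (hdiff y).hasFDerivAt) hB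
    have key : B (u, 0) (v, 0) = B (0, u) (0, v) := by
      have h1 : ((u, 0) : V × V) = (u, u) - (0, u) := by simp
      have h2 : ((v, 0) : V × V) = (v, v) - (0, v) := by simp
      have hA : B (u, 0) = -(B (0, u)) := by
        rw [h1, map_sub, hdiag u, zero_sub]
      calc B (u, 0) (v, 0) = -(B (0, u) (v, 0)) := by rw [hA]; rfl
        _ = -(B (0, u) (v, v) - B (0, u) (0, v)) := by rw [h2, map_sub]
        _ = B (0, u) (0, v) := by rw [hsymm (0, u) (v, v), hdiag v]; simp
    have hLHS : iteratedFDeriv ℝ 2 (F ∘ (e : (V × V) →L[ℝ] (V × V))) (x, x) =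
        (iteratedFDeriv ℝ 2 F ((e : (V × V) →L[ℝ] (V × V)) (x, x))).compContinuousLinearMap
          fun _ => (e : (V × V) →L[ℝ] (V × V)) :=
      (e : (V × V) →L[ℝ] (V × V)).iteratedFDeriv_comp_right hF (x, x) (by norm_cast)
    have happ : iteratedFDeriv ℝ 2 (fun p : V × V => F (p.2, p.1)) (x, x) ![(0, u), (0, v)]
        = iteratedFDeriv ℝ 2 F (x, x) ![(u, 0), (v, 0)] := by
      have hfun : (fun p : V × V => F (p.2, p.1)) = F ∘ ⇑(e : (V × V) →L[ℝ] (V × V)) := rfl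
      have hxx : ((e : (V × V) →L[ℝ] (V × V)) (x, x)) = (x, x) := rfl
      rw [hfun, hLHS, ContinuousMultilinearMap.compContinuousLinearMap_apply, hxx]
      congr 1
      funext i
      fin_cases i <;> rfl
    rw [happ, iteratedFDeriv_two_apply, iteratedFDeriv_two_apply]
    simpa [← hBdef] using key
end

section
/- Let V be a real normed vector space, let k ≥ 0, and let F : V × V → ℝ be a C^∞ function such that for every x ∈ V and every j with 0 ≤ j ≤ k the j-th iterated Fréchet derivative of F vanishes at (x,x). Define G : V × V → ℝ by G(x,y) := F(x,y) + (−1)^k · F(y,x). Then for every x ∈ V and every j with 0 ≤ j ≤ k+1 the j-th iterated Fréchet derivative of G vanishes at (x,x). -/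
open Fin

universe u w

variable {V : Type u} [NormedAddCommGroup V] [NormedSpace ℝ V]

/-- Curve lemma: derivative of a function vanishing on the diagonal, in a diagonal
direction, vanishes. -/
lemma diag_fderiv_zero {W : Type*} [NormedAddCommGroup W] [NormedSpace ℝ W]
    (Φ : V × V → W) (hΦ : Differentiable ℝ Φ) (h0 : ∀ y : V, Φ (y, y) = 0)
    (x u : V) : fderiv ℝ Φ (x, x) (u, u) = 0 := by
  set L : ℝ →L[ℝ] V × V := (1 : ℝ →L[ℝ] ℝ).smulRight ((u, u) : V × V) with hL
  have hγ : HasFDerivAt (fun t : ℝ => ((x, x) : V × V) + t • ((u, u) : V × V)) L 0 := by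
    exact ((hasFDerivAt_id (0 : ℝ)).smul_const ((u, u) : V × V)).const_add ((x, x) : V × V)
  have hcomp : HasFDerivAt (fun t : ℝ => Φ (((x, x) : V × V) + t • ((u, u) : V × V)))
      ((fderiv ℝ Φ (x, x)).comp L) 0 := by
    have h1 : HasFDerivAt Φ (fderiv ℝ Φ ((x, x) + (0:ℝ) • ((u,u) : V × V)))
        (((x, x) : V × V) + (0:ℝ) • ((u,u) : V × V)) := (hΦ _).hasFDerivAt
    have := h1.comp (0:ℝ) hγ
    simpa [Function.comp_def] using this
  have hzero : (fun t : ℝ => Φ (((x, x) : V × V) + t • ((u, u) : V × V))) = fun _ => (0 : W) := by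
    funext t
    have : ((x, x) : V × V) + t • ((u, u) : V × V) = (x + t • u, x + t • u) := by
      simp [Prod.ext_iff]
    rw [this, h0]
  rw [hzero] at hcomp
  have h2 : ((fderiv ℝ Φ (x, x)).comp L) = 0 := by
    rw [← hcomp.fderiv]
    simp
  have h3 := DFunLike.congr_fun h2 (1 : ℝ)
  simpa [hL] using h3

/-- The two innermost slots of an iterated derivative of a smooth function can be
swapped. -/
lemma comp_left_aux {E W' W'' : Type*} [NormedAddCommGroup E] [NormedSpace ℝ E]
    [NormedAddCommGroup W'] [NormedSpace ℝ W'] [NormedAddCommGroup W''] [NormedSpace ℝ W'']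
    (H : E → W') (hH : ContDiff ℝ (⊤ : ℕ∞) H)
    (G : W' →L[ℝ] W'') (x : E) (n : ℕ) :
    iteratedFDeriv ℝ n (fun y => G (H y)) x
      = G.compContinuousMultilinearMap (iteratedFDeriv ℝ n H x) :=
  ContinuousLinearMap.iteratedFDeriv_comp_left G hH.contDiffAt (by exact_mod_cast le_top)

/-- If the k-th derivative vanishes on the diagonal, then the (k+1)-st derivative
vanishes when its *first* slot holds a diagonal vector. -/
lemma keyA0 {W : Type*} [NormedAddCommGroup W] [NormedSpace ℝ W]
    (k : ℕ) (F : V × V → W) (hF : ContDiff ℝ (⊤ : ℕ∞) F)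
    (hvk : ∀ y : V, iteratedFDeriv ℝ k F (y, y) = 0)
    (x : V) (m : Fin (k + 1) → V × V) (u : V) (hm : m 0 = (u, u)) :
    iteratedFDeriv ℝ (k + 1) F (x, x) m = 0 := by
  have hΦ : Differentiable ℝ (iteratedFDeriv ℝ k F) := by
    have : ContDiff ℝ 1 (iteratedFDeriv ℝ k F) :=
      hF.iteratedFDeriv_right (by exact_mod_cast le_top)
    exact this.differentiable one_ne_zero
  have h := diag_fderiv_zero (iteratedFDeriv ℝ k F) hΦ (fun y => hvk y) x u
  rw [iteratedFDeriv_succ_apply_left, hm, h]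
  rfl

lemma swap_inner {W : Type*} [NormedAddCommGroup W] [NormedSpace ℝ W]
    (F : V × V → W) (hF : ContDiff ℝ (⊤ : ℕ∞) F) (n : ℕ) (x : V × V)
    (v : Fin n → V × V) (a b : V × V) :
    iteratedFDeriv ℝ (n + 2) F x (snoc (snoc v a) b)
      = iteratedFDeriv ℝ (n + 2) F x (snoc (snoc v b) a) := by
  have hF1 : ContDiff ℝ (⊤ : ℕ∞) (fun y => fderiv ℝ F y) :=
    hF.fderiv_right (by exact_mod_cast le_top)
  set H : V × V → (V × V) →L[ℝ] (V × V) →L[ℝ] W :=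
    fun y => fderiv ℝ (fun y => fderiv ℝ F y) y with hH
  have hHc : ContDiff ℝ (⊤ : ℕ∞) H := hF1.fderiv_right (by exact_mod_cast le_top)
  have key : ∀ (c d : V × V) (v' : Fin n → V × V),
      iteratedFDeriv ℝ (n + 2) F x (snoc (snoc v' c) d)
        = iteratedFDeriv ℝ n H x v' c d := by
    intro c d v'
    rw [iteratedFDeriv_succ_apply_right]
    simp only [init_snoc, snoc_last]
    rw [iteratedFDeriv_succ_apply_right]
    simp only [init_snoc, snoc_last]
    rfl
  rw [key, key]
  -- now use symmetry of the second derivative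
  have hsymm : ∀ y : V × V, ∀ c d : V × V, H y c d = H y d c := by
    intro y c d
    exact (hF.contDiffAt.isSymmSndFDerivAt (by simp [minSmoothness_of_isRCLikeNormedField]; exact WithTop.coe_le_coe.mpr (le_top : ((2 : ℕ∞) ≤ ⊤)))).eq c d
  obtain ⟨G, hGdef⟩ : ∃ G : ((V × V) →L[ℝ] (V × V) →L[ℝ] W) →L[ℝ]
      ((V × V) →L[ℝ] (V × V) →L[ℝ] W),
      ∀ (M : (V × V) →L[ℝ] (V × V) →L[ℝ] W) (c d : V × V), G M c d = M d c :=
    ⟨(ContinuousLinearMap.flipₗᵢ ℝ (V × V) (V × V) W).toLinearIsometry.toContinuousLinearMap,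
      fun _ _ _ => rfl⟩
  have hGH : (fun y => G (H y)) = H := by
    funext y
    refine ContinuousLinearMap.ext fun c => ContinuousLinearMap.ext fun d => ?_
    exact (hGdef _ _ _).trans (hsymm y d c)
  have hcomp := comp_left_aux (W'' := (V × V) →L[ℝ] (V × V) →L[ℝ] W) H hHc G x n
  have : iteratedFDeriv ℝ n (fun y => G (H y)) x = iteratedFDeriv ℝ n H x := by rw [hGH]
  rw [hcomp] at this
  have happ := DFunLike.congr_fun this.symm v
  rw [ContinuousLinearMap.compContinuousMultilinearMap_coe] at happ
  -- happ : iteratedFDeriv ℝ n H x v = G (iteratedFDeriv ℝ n H x v)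
  conv_lhs => rw [happ]
  exact hGdef _ _ _

/-- Main induction: the `(k+1)`-st derivative of a contrast function of degree `k`
vanishes on the diagonal as soon as one of its arguments is a diagonal vector. -/
lemma keyA : ∀ (k : ℕ) {W : Type (max u w)} [NormedAddCommGroup W] [NormedSpace ℝ W]
    (F : V × V → W), ContDiff ℝ (⊤ : ℕ∞) F →
    (∀ x : V, ∀ j ≤ k, iteratedFDeriv ℝ j F (x, x) = 0) →
    ∀ (x : V) (m : Fin (k + 1) → V × V) (i₀ : Fin (k + 1)) (u : V),
      m i₀ = (u, u) → iteratedFDeriv ℝ (k + 1) F (x, x) m = 0 := by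
  intro k
  induction k with
  | zero =>
    intro W _ _ F hF hv x m i₀ u hm
    have h0 : i₀ = 0 := Fin.eq_zero i₀
    rw [h0] at hm
    exact keyA0 0 F hF (fun y => hv y 0 le_rfl) x m u hm
  | succ k IH =>
    intro W _ _ F hF hv x m i₀ u hm
    have hF1 : ContDiff ℝ (⊤ : ℕ∞) (fun y => fderiv ℝ F y) :=
      hF.fderiv_right (by exact_mod_cast le_top)
    have hv1 : ∀ x : V, ∀ j ≤ k, iteratedFDeriv ℝ j (fun y => fderiv ℝ F y) (x, x) = 0 := by
      intro x j hj
      refine ContinuousMultilinearMap.ext fun v => ContinuousLinearMap.ext fun z => ?_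
      have h := iteratedFDeriv_succ_apply_right (𝕜 := ℝ) (f := F) (x := ((x, x) : V × V))
        (n := j) (snoc v z)
      rw [init_snoc, snoc_last, hv x (j + 1) (by omega)] at h
      simpa using h.symm
    have branch1 : ∀ (m : Fin (k + 2) → V × V) (j : Fin (k + 2)), j ≠ last (k + 1) →
        m j = (u, u) → iteratedFDeriv ℝ (k + 2) F (x, x) m = 0 := by
      intro m j hj hmj
      rw [iteratedFDeriv_succ_apply_right]
      have hinit : init m (j.castPred hj) = (u, u) := by
        show m (castSucc (j.castPred hj)) = (u, u)
        rwa [castSucc_castPred]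
      rw [IH (fun y => fderiv ℝ F y) hF1 hv1 x (init m) (j.castPred hj) u hinit]
      simp
    by_cases hlast : i₀ = last (k + 1)
    · have h1 : snoc (init m) (m (last (k + 1))) = m := snoc_init_self m
      have h2 : snoc (init (init m)) (init m (last k)) = init m := snoc_init_self (init m)
      rw [← h1, ← h2, swap_inner F hF k (x, x)]
      refine branch1 _ (castSucc (last k)) (castSucc_lt_last (last k)).ne ?_
      rw [snoc_castSucc, snoc_last, ← hlast, hm]
    · exact branch1 m i₀ hlast hm

/-- Real-valued version of `keyA`. -/
lemma keyA' (k : ℕ) (F : V × V → ℝ) (hF : ContDiff ℝ (⊤ : ℕ∞) F)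
    (hv : ∀ x : V, ∀ j ≤ k, iteratedFDeriv ℝ j F (x, x) = 0)
    (x : V) (m : Fin (k + 1) → V × V) (i₀ : Fin (k + 1)) (u : V)
    (hm : m i₀ = (u, u)) : iteratedFDeriv ℝ (k + 1) F (x, x) m = 0 := by
  set e : ℝ →L[ℝ] ULift.{u} ℝ :=
    (LinearIsometryEquiv.ulift ℝ ℝ).symm.toLinearIsometry.toContinuousLinearMap with he
  have hFe : ContDiff ℝ (⊤ : ℕ∞) (fun p => e (F p)) := e.contDiff.comp hF
  have hcomp : ∀ (j : ℕ) (y : V × V), iteratedFDeriv ℝ j (fun p => e (F p)) y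
      = e.compContinuousMultilinearMap (iteratedFDeriv ℝ j F y) :=
    fun j y => comp_left_aux F hF e y j
  have hve : ∀ x : V, ∀ j ≤ k, iteratedFDeriv ℝ j (fun p => e (F p)) ((x, x) : V × V) = 0 := by
    intro x j hj
    rw [hcomp, hv x j hj]
    ext v
    simp
  have h := keyA.{u, u} k (fun p => e (F p)) hFe hve x m i₀ u hm
  rw [hcomp] at h
  have h2 := congrArg ULift.down h
  exact h2

/-- If `F : V × V → ℝ` is a contrast function of degree `k` (all iterated Fréchet
derivatives of order `≤ k` vanish on the diagonal), then
`G = F + (−1)^k · F ∘ inv`, with `inv(x,y) = (y,x)`, is a contrast function of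
degree `k + 1`. -/
theorem contrast_degree_succ_of_add_inv
    {V : Type*} [NormedAddCommGroup V] [NormedSpace ℝ V]
    (k : ℕ) (F : V × V → ℝ) (hF : ContDiff ℝ (⊤ : ℕ∞) F)
    (hvanish : ∀ x : V, ∀ j ≤ k, iteratedFDeriv ℝ j F (x, x) = 0) :
    ∀ x : V, ∀ j ≤ k + 1,
      iteratedFDeriv ℝ j (fun p : V × V => F p + (-1 : ℝ) ^ k * F (p.2, p.1)) (x, x) = 0 := by
  intro x j hj
  set σ : (V × V) →L[ℝ] (V × V) :=
    (ContinuousLinearMap.snd ℝ V V).prod (ContinuousLinearMap.fst ℝ V V) with hσ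
  have hFσ : ContDiff ℝ (⊤ : ℕ∞) (F ∘ σ) := hF.comp σ.contDiff
  have hGeq : (fun p : V × V => F p + (-1 : ℝ) ^ k * F (p.2, p.1))
      = F + (-1 : ℝ) ^ k • (F ∘ σ) := rfl
  have hσd : ∀ (i : ℕ) (y : V × V), iteratedFDeriv ℝ i (F ∘ σ) y
      = (iteratedFDeriv ℝ i F (σ y)).compContinuousLinearMap (fun _ => σ) :=
    fun i y => σ.iteratedFDeriv_comp_right hF y (by exact_mod_cast le_top)
  have hFj : ContDiff ℝ j F := hF.of_le (by exact_mod_cast le_top)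
  have hFσj : ContDiff ℝ j ((-1 : ℝ) ^ k • (F ∘ σ)) := by
    have := (hFσ.of_le (m := (j : WithTop ℕ∞)) (by exact_mod_cast le_top)).const_smul
      ((-1 : ℝ) ^ k)
    exact this
  rw [hGeq]
  ext m
  rw [iteratedFDeriv_add_apply hFj.contDiffAt hFσj.contDiffAt]
  have hsm : iteratedFDeriv ℝ j ((-1 : ℝ) ^ k • (F ∘ σ)) (x, x)
      = (-1 : ℝ) ^ k • iteratedFDeriv ℝ j (F ∘ σ) (x, x) :=
    iteratedFDeriv_const_smul_apply (hFσ.of_le (m := (j : WithTop ℕ∞)) (by exact_mod_cast le_top)).contDiffAt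
  rw [hsm, hσd]
  have hσxx : σ ((x, x) : V × V) = (x, x) := rfl
  rw [hσxx]
  by_cases hjk : j ≤ k
  · rw [hvanish x j hjk]
    simp
  · have hjeq : j = k + 1 := by omega
    subst hjeq
    set D := iteratedFDeriv ℝ (k + 1) F (x, x) with hD
    -- decomposition into symmetric and antisymmetric parts
    set wv : Fin (k + 1) → V := fun i => (2 : ℝ)⁻¹ • ((m i).1 + (m i).2) with hwv
    set s : Fin (k + 1) → V × V := fun i => (wv i, wv i) with hs
    set a : Fin (k + 1) → V × V := fun i => m i - s i with ha
    have hma : m = s + a := by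
      funext i
      show m i = s i + (m i - s i)
      abel
    have hσm : (fun i => σ (m i)) = s + fun i => (-1 : ℝ) • a i := by
      funext i
      show ((m i).2, (m i).1) = s i + (-1 : ℝ) • (m i - s i)
      rw [Prod.ext_iff]
      constructor
      · show (m i).2 = wv i + (-1 : ℝ) • ((m i).1 - wv i)
        rw [hwv]
        module
      · show (m i).1 = wv i + (-1 : ℝ) • ((m i).2 - wv i)
        rw [hwv]
        module
    have hzero : ∀ (t : Finset (Fin (k + 1))), t.Nonempty →
        ∀ b : Fin (k + 1) → V × V, D (t.piecewise s b) = 0 := by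
      intro t ht b
      obtain ⟨i, hi⟩ := ht
      exact keyA' k F hF hvanish x (t.piecewise s b) i (wv i)
        (by rw [Finset.piecewise_eq_of_mem _ _ _ hi])
    have expand : ∀ b : Fin (k + 1) → V × V, D (s + b) = D b := by
      intro b
      have h1 : D (s + b) = ∑ t : Finset (Fin (k + 1)), D (t.piecewise s b) :=
        D.toMultilinearMap.map_add_univ s b
      rw [h1]
      rw [Finset.sum_eq_single ∅]
      · rw [Finset.piecewise_empty]
      · intro t _ htne
        exact hzero t (Finset.nonempty_iff_ne_empty.mpr htne) b
      · intro h
        exact absurd (Finset.mem_univ ∅) h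
    have e1 : D m = D a := by rw [hma]; exact expand a
    have e2 : D (fun i => σ (m i)) = (-1 : ℝ) ^ (k + 1) • D a := by
      rw [hσm, expand]
      have := D.toMultilinearMap.map_smul_univ (fun _ => (-1 : ℝ)) a
      simpa using this
    rw [ContinuousMultilinearMap.add_apply, ContinuousMultilinearMap.smul_apply,
      ContinuousMultilinearMap.compContinuousLinearMap_apply]
    show D m + (-1 : ℝ) ^ k • D (fun i => σ (m i)) = 0
    rw [e1, e2, smul_smul]
    have hpow : (-1 : ℝ) ^ k * (-1 : ℝ) ^ (k + 1) = -1 := by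
      rw [← pow_add]
      exact Odd.neg_one_pow ⟨k, by ring⟩
    rw [hpow]
    simp
end

section
/- Let V be a real normed vector space and let F : V × V → ℝ be a contrast function. Define g^F(x)(u,v) := D²F(x,x)((0,u),(0,v)), Γ^F(x)(u,v,w) := −D³F(x,x)((0,u),(0,v),(w,0)), and Γ^{F,*}(x)(u,v,w) := −D³F(x,x)((u,0),(v,0),(0,w)). Then the duality relation holds: for all x, u, v, w ∈ V, the derivative at t = 0 of the real function t ↦ g^F(x + t·u)(v,w) equals Γ^F(x)(u,v,w) + Γ^{F,*}(x)(u,w,v). -/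
set_option maxHeartbeats 1000000
set_option synthInstance.maxHeartbeats 400000

lemma iteratedFDeriv_three_apply
    {E G : Type*} [NormedAddCommGroup E] [NormedSpace ℝ E]
    [NormedAddCommGroup G] [NormedSpace ℝ G]
    (f : E → G) (z : E) (m : Fin 3 → E) :
    iteratedFDeriv ℝ 3 f z m
      = fderiv ℝ (fderiv ℝ (fderiv ℝ f)) z (m 0) (m 1) (m 2) := by
  rw [iteratedFDeriv_succ_apply_right, iteratedFDeriv_two_apply]
  rfl

/-- Duality relation for the dual connections induced by a contrast function `F` on the
pair groupoid `V × V`: with `g^F(x)(v,w) = D²F(x,x)((0,v),(0,w))`,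
`Γ^F(x)(u,v,w) = −D³F(x,x)((0,u),(0,v),(w,0))` and
`Γ^{F,*}(x)(u,v,w) = −D³F(x,x)((u,0),(v,0),(0,w))`, one has
`∂_u[g^F(·)(v,w)](x) = Γ^F(x)(u,v,w) + Γ^{F,*}(x)(u,w,v)`. -/
theorem contrast_duality_relation
    {V : Type*} [NormedAddCommGroup V] [NormedSpace ℝ V]
    (F : V × V → ℝ) (hF : ContDiff ℝ (⊤ : ℕ∞) F)
    (hF0 : ∀ x : V, F (x, x) = 0) (hdF : ∀ x : V, fderiv ℝ F (x, x) = 0)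
    (x u v w : V) :
    deriv (fun t : ℝ =>
        iteratedFDeriv ℝ 2 F (x + t • u, x + t • u) ![(0, v), (0, w)]) 0
      = -iteratedFDeriv ℝ 3 F (x, x) ![(0, u), (0, v), (w, 0)]
        + -iteratedFDeriv ℝ 3 F (x, x) ![(u, 0), (w, 0), (0, v)] := by
  set D1 : (V × V) → ((V × V) →L[ℝ] ℝ) := fderiv ℝ F with hD1def
  set D2 : (V × V) → ((V × V) →L[ℝ] (V × V) →L[ℝ] ℝ) := fderiv ℝ D1 with hD2def
  have hF1 : ContDiff ℝ (⊤ : ℕ∞) D1 := by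
    rw [hD1def]; exact hF.fderiv_right (m := (⊤ : ℕ∞)) (by exact_mod_cast le_top)
  have hF2 : ContDiff ℝ (⊤ : ℕ∞) D2 := by
    rw [hD2def]; exact hF1.fderiv_right (m := (⊤ : ℕ∞)) (by exact_mod_cast le_top)
  have hdiffD1 : Differentiable ℝ D1 := hF1.differentiable (by simp)
  have hdiffD2 : Differentiable ℝ D2 := hF2.differentiable (by simp)
  set T3 : (V × V) →L[ℝ] (V × V) →L[ℝ] (V × V) →L[ℝ] ℝ := fderiv ℝ D2 (x, x) with hT3def
  have hD2at : HasFDerivAt D2 T3 (x, x) := (hdiffD2 (x, x)).hasFDerivAt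
  -- symmetry of the last two slots of T3
  have hsymD2 : ∀ y : V × V, ∀ b c : V × V, D2 y b c = D2 y c b := by
    intro y b c
    exact second_derivative_symmetric
      (fun z => (hF.differentiable (by simp) z).hasFDerivAt)
      ((hdiffD1 y).hasFDerivAt) b c
  have hstep : ∀ p q : V × V,
      HasFDerivAt (fun y => D2 y p q) ((T3.flip p).flip q) (x, x) := by
    intro p q
    have h1 : HasFDerivAt (fun y => D2 y p) (T3.flip p) (x, x) := by
      have := hD2at.clm_apply (hasFDerivAt_const (p : V × V) ((x, x) : V × V))
      simpa using this
    have h2 := h1.clm_apply (hasFDerivAt_const (q : V × V) ((x, x) : V × V))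
    simpa using h2
  have hflip : ∀ a b c : V × V, T3 a b c = T3 a c b := by
    intro a b c
    have heq : (fun y : V × V => D2 y b c) = (fun y : V × V => D2 y c b) :=
      funext fun y => hsymD2 y b c
    have h2' : HasFDerivAt (fun y : V × V => D2 y b c) ((T3.flip c).flip b) (x, x) := by
      rw [heq]; exact hstep c b
    have huniq := (hstep b c).unique h2'
    have := DFunLike.congr_fun huniq a
    simpa using this
  -- the diagonal map
  set d : V →L[ℝ] V × V := (ContinuousLinearMap.id ℝ V).prod (ContinuousLinearMap.id ℝ V) with hd
  have hdap : ∀ p : V, d p = (p, p) := fun p => rfl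
  -- diagonal vanishing of D2
  have hd2 : ∀ a p : V, D2 (a, a) (p, p) = 0 := by
    intro a p
    have hb : HasFDerivAt D1 (D2 (a, a)) (d a) := by
      rw [hD2def]; exact (hdiffD1 (a, a)).hasFDerivAt
    have hcomp : HasFDerivAt (fun z : V => D1 (z, z)) ((D2 (a, a)).comp d) a :=
      hb.comp a (d.hasFDerivAt)
    have hzero : (fun z : V => D1 (z, z)) = fun _ => (0 : (V × V) →L[ℝ] ℝ) := by
      funext z; exact hdF z
    rw [hzero] at hcomp
    have h0 : ((D2 (a, a)).comp d) = 0 := hcomp.unique (hasFDerivAt_const _ _)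
    have := DFunLike.congr_fun h0 p
    simpa [hdap] using this
  -- diagonal vanishing of T3 in first two slots
  have hd3 : ∀ p q : V, T3 (p, p) (q, q) = 0 := by
    intro p q
    have hb : HasFDerivAt D2 T3 (d x) := hD2at
    have hcomp : HasFDerivAt (fun z : V => D2 (z, z)) (T3.comp d) x :=
      by have := HasFDerivAt.comp (f := ⇑d) (g := D2) x hb (d.hasFDerivAt); exact this
    have happ : HasFDerivAt (fun z : V => D2 (z, z) (q, q))
        (((fun z : V => D2 (z, z)) x).comp (0 : V →L[ℝ] V × V)
          + (T3.comp d).flip ((q, q) : V × V)) x :=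
      hcomp.clm_apply (hasFDerivAt_const _ _)
    have hzero : (fun z : V => D2 (z, z) (q, q)) = fun _ => (0 : (V × V) →L[ℝ] ℝ) := by
      funext z; exact hd2 z q
    rw [hzero] at happ
    have h0 := (happ.unique (hasFDerivAt_const _ _))
    have := DFunLike.congr_fun h0 p
    simp only [ContinuousLinearMap.add_apply, ContinuousLinearMap.comp_zero,
      ContinuousLinearMap.zero_apply, ContinuousLinearMap.flip_apply,
      ContinuousLinearMap.comp_apply, zero_add] at this
    rw [hdap] at this
    exact this
  -- compute the LHS derivative
  have hφ : HasDerivAt (fun t : ℝ => ((x + t • u, x + t • u) : V × V)) ((u, u) : V × V) 0 := by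
    have h1 : HasDerivAt (fun t : ℝ => x + t • u) u 0 := by
      simpa using ((hasDerivAt_id (0 : ℝ)).smul_const u).const_add x
    exact h1.prodMk h1
  have hchain : HasDerivAt (fun t : ℝ => D2 (x + t • u, x + t • u)) (T3 (u, u)) 0 := by
    have hb : HasFDerivAt D2 T3 ((x + (0:ℝ) • u, x + (0:ℝ) • u) : V × V) := by
      simpa using hD2at
    have := HasFDerivAt.comp_hasDerivAt (l := D2) 0 hb hφ
    exact this
  have happ1 : HasDerivAt (fun t : ℝ => D2 (x + t • u, x + t • u) ((0, v) : V × V))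
      (T3 (u, u) (0, v)) 0 := by
    have := hchain.clm_apply (hasDerivAt_const 0 ((0, v) : V × V))
    simpa using this
  have happ2 : HasDerivAt (fun t : ℝ => D2 (x + t • u, x + t • u) ((0, v) : V × V) ((0, w) : V × V))
      (T3 (u, u) (0, v) (0, w)) 0 := by
    have := happ1.clm_apply (hasDerivAt_const 0 ((0, w) : V × V))
    simpa using this
  have hLHS : deriv (fun t : ℝ =>
      iteratedFDeriv ℝ 2 F (x + t • u, x + t • u) ![(0, v), (0, w)]) 0
      = T3 (u, u) (0, v) (0, w) := by
    have : (fun t : ℝ =>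
        iteratedFDeriv ℝ 2 F (x + t • u, x + t • u) ![(0, v), (0, w)])
        = fun t : ℝ => D2 (x + t • u, x + t • u) ((0, v) : V × V) ((0, w) : V × V) := by
      funext t
      rw [iteratedFDeriv_two_apply]
      simp [hD2def, hD1def]
    rw [this, happ2.deriv]
  -- rewrite RHS via nested derivatives
  have hR1 : iteratedFDeriv ℝ 3 F (x, x) ![(0, u), (0, v), (w, 0)]
      = T3 (0, u) (0, v) (w, 0) := by
    rw [iteratedFDeriv_three_apply]; simp [hT3def, hD2def, hD1def]
  have hR2 : iteratedFDeriv ℝ 3 F (x, x) ![(u, 0), (w, 0), (0, v)]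
      = T3 (u, 0) (w, 0) (0, v) := by
    rw [iteratedFDeriv_three_apply]; simp [hT3def, hD2def, hD1def]
  rw [hLHS, hR1, hR2]
  -- final algebra
  have e1 : T3 ((u, u) : V × V) = T3 (u, 0) + T3 (0, u) := by
    have : ((u, u) : V × V) = (u, 0) + (0, u) := by simp [Prod.ext_iff]
    rw [this, map_add]
  have e2 : T3 (u, u) (0, v) (0, w) + T3 (u, u) (0, v) (w, 0)
      = T3 (u, u) (0, v) (w, w) := by
    have : ((w, w) : V × V) = (0, w) + (w, 0) := by simp [Prod.ext_iff]
    rw [this, map_add]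
  have e3 : T3 (u, u) (0, v) (w, w) = 0 := by
    rw [hflip]
    rw [hd3 u w]
    rfl
  have e4 : T3 (u, 0) (w, 0) (0, v) = T3 (u, 0) (0, v) (w, 0) := hflip _ _ _
  have e5 : T3 (u, u) (0, v) (w, 0)
      = T3 (u, 0) (0, v) (w, 0) + T3 (0, u) (0, v) (w, 0) := by
    rw [e1]; rfl
  rw [e4]
  linarith [e2, e3, e5]
end

section
/- Let V be a real normed vector space and let F : V × V → ℝ be a contrast function, with g^F, Γ^F, Γ^{F,*} defined as above. Then the average (1/2)(Γ^F + Γ^{F,*}) is the Levi-Civita (Koszul) form of g^F: for all x, u, v, w ∈ V, (1/2)(Γ^F(x)(u,v,w) + Γ^{F,*}(x)(u,v,w)) = (1/2)( ∂_u[g^F(·)(v,w)](x) + ∂_v[g^F(·)(u,w)](x) − ∂_w[g^F(·)(u,v)](x) ), where ∂_u[g^F(·)(v,w)](x) denotes the derivative at t = 0 of t ↦ g^F(x + t·u)(v,w). -/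
open scoped Topology

section Aux

variable {V : Type*} [NormedAddCommGroup V] [NormedSpace ℝ V]

/-- Chain rule: derivative along the diagonal of an iterated derivative. -/
lemma key_deriv (G : V × V → ℝ) (hG : ContDiff ℝ (⊤ : ℕ∞) G) (n : ℕ)
    (x a : V) (m : Fin n → V × V) :
    deriv (fun t : ℝ => iteratedFDeriv ℝ n G (x + t • a, x + t • a) m) 0
      = iteratedFDeriv ℝ (n + 1) G (x, x) (Fin.cons (a, a) m) := by
  have hΦ : ContDiff ℝ 1 (iteratedFDeriv ℝ n G) :=
    hG.iteratedFDeriv_right (by exact_mod_cast le_top)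
  have hγ : HasDerivAt (fun t : ℝ => ((x + t • a, x + t • a) : V × V)) (a, a) 0 := by
    have h1 : HasDerivAt (fun t : ℝ => x + t • a) a 0 := by
      simpa using ((hasDerivAt_id (0 : ℝ)).smul_const a).const_add x
    exact h1.prodMk h1
  have hΦx : HasFDerivAt (iteratedFDeriv ℝ n G)
      (fderiv ℝ (iteratedFDeriv ℝ n G) (x, x)) (x + (0:ℝ) • a, x + (0:ℝ) • a) := by
    simpa using (hΦ.differentiable one_ne_zero (x, x)).hasFDerivAt
  have hcomp := hΦx.comp_hasDerivAt 0 hγ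
  have happ :=
    ((ContinuousMultilinearMap.apply ℝ (fun _ : Fin n => V × V) ℝ m).hasFDerivAt).comp_hasDerivAt
      0 hcomp
  have hder : deriv (fun t : ℝ => iteratedFDeriv ℝ n G (x + t • a, x + t • a) m) 0
      = (fderiv ℝ (iteratedFDeriv ℝ n G) (x, x)) (a, a) m := happ.deriv
  rw [hder, iteratedFDeriv_succ_apply_left]
  simp

/-- Multilinear additivity in slot 0 for 3-ary maps. -/
lemma T_add0 (T : ContinuousMultilinearMap ℝ (fun _ : Fin 3 => V × V) ℝ)
    (a b q r : V × V) : T ![a + b, q, r] = T ![a, q, r] + T ![b, q, r] := by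
  have h : ∀ c : V × V, ![c, q, r] = Function.update ![a, q, r] 0 c := by
    intro c; funext i; fin_cases i <;> simp
  rw [h (a + b), T.map_update_add ![a, q, r] 0 a b, ← h a, ← h b]

/-- Multilinear additivity in slot 1 for 3-ary maps. -/
lemma T_add1 (T : ContinuousMultilinearMap ℝ (fun _ : Fin 3 => V × V) ℝ)
    (p a b r : V × V) : T ![p, a + b, r] = T ![p, a, r] + T ![p, b, r] := by
  have h : ∀ c : V × V, ![p, c, r] = Function.update ![p, a, r] 1 c := by
    intro c; funext i; fin_cases i <;> simp
  rw [h (a + b), T.map_update_add ![p, a, r] 1 a b, ← h a, ← h b]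

/-- Evaluation commutes with `fderiv` of the iterated derivative. -/
lemma eval_fderiv (F : V × V → ℝ) (hF : ContDiff ℝ (⊤ : ℕ∞) F) (n : ℕ)
    (y : V × V) (mvec : Fin n → V × V) (p : V × V) :
    fderiv ℝ (fun z => iteratedFDeriv ℝ n F z mvec) y p
      = fderiv ℝ (iteratedFDeriv ℝ n F) y p mvec := by
  have hΦ : ContDiff ℝ 1 (iteratedFDeriv ℝ n F) :=
    hF.iteratedFDeriv_right (by exact_mod_cast le_top)
  have h := ((ContinuousMultilinearMap.apply ℝ (fun _ : Fin n => V × V) ℝ mvec).hasFDerivAt.comp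
    y (hΦ.differentiable one_ne_zero y).hasFDerivAt).fderiv
  have h2 : fderiv ℝ (fun z => iteratedFDeriv ℝ n F z mvec) y
      = (ContinuousMultilinearMap.apply ℝ (fun _ : Fin n => V × V) ℝ mvec).comp
        (fderiv ℝ (iteratedFDeriv ℝ n F) y) := h
  rw [h2]; rfl

/-- Second derivative symmetry for `iteratedFDeriv 2`. -/
lemma sym2 (F : V × V → ℝ) (hF : ContDiff ℝ (⊤ : ℕ∞) F) (z : V × V) (q r : V × V) :
    iteratedFDeriv ℝ 2 F z ![q, r] = iteratedFDeriv ℝ 2 F z ![r, q] := by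
  rw [iteratedFDeriv_two_apply, iteratedFDeriv_two_apply]
  have := (hF.contDiffAt (x := z)).isSymmSndFDerivAt (n := ((⊤ : ℕ∞) : WithTop ℕ∞))
    (by rw [minSmoothness_of_isRCLikeNormedField]; exact WithTop.coe_le_coe.mpr le_top)
  simpa using this.eq q r

/-- Swap of the last two slots of the third derivative. -/
lemma swap12 (F : V × V → ℝ) (hF : ContDiff ℝ (⊤ : ℕ∞) F) (y : V × V) (p q r : V × V) :
    iteratedFDeriv ℝ 3 F y ![p, q, r] = iteratedFDeriv ℝ 3 F y ![p, r, q] := by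
  have htail : ∀ a b c : V × V, Fin.tail ![a, b, c] = ![b, c] := by
    intro a b c; funext i; fin_cases i <;> rfl
  have e : ∀ a b c : V × V, iteratedFDeriv ℝ 3 F y ![a, b, c]
      = fderiv ℝ (iteratedFDeriv ℝ 2 F) y a ![b, c] := by
    intro a b c
    have h := iteratedFDeriv_succ_apply_left (𝕜 := ℝ) (f := F) (x := y) (n := 2) ![a, b, c]
    simp only [Matrix.cons_val_zero] at h
    rw [htail a b c] at h
    exact h
  rw [e, e]
  rw [← eval_fderiv F hF 2 y ![q, r] p, ← eval_fderiv F hF 2 y ![r, q] p]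
  have hfun : (fun z => iteratedFDeriv ℝ 2 F z ![q, r])
      = (fun z => iteratedFDeriv ℝ 2 F z ![r, q]) := funext fun z => sym2 F hF z q r
  rw [hfun]

/-- Swap of the first two slots of the third derivative. -/
lemma swap01 (F : V × V → ℝ) (hF : ContDiff ℝ (⊤ : ℕ∞) F) (y : V × V) (p q r : V × V) :
    iteratedFDeriv ℝ 3 F y ![p, q, r] = iteratedFDeriv ℝ 3 F y ![q, p, r] := by
  have hg : ContDiffAt ℝ 2 (fderiv ℝ F) y :=
    (hF.fderiv_right (by norm_cast)).contDiffAt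
  have hsym := hg.isSymmSndFDerivAt (n := (2 : WithTop ℕ∞)) (by simp)
  have key : ∀ a b c : V × V, iteratedFDeriv ℝ 3 F y ![a, b, c]
      = fderiv ℝ (fderiv ℝ (fun z => fderiv ℝ F z)) y a b c := by
    intro a b c
    have h := iteratedFDeriv_succ_apply_right (𝕜 := ℝ) (f := F) (x := y) (n := 2) ![a, b, c]
    rw [iteratedFDeriv_two_apply] at h
    have hi0 : Fin.init ![a, b, c] 0 = a := rfl
    have hi1 : Fin.init ![a, b, c] 1 = b := rfl
    have hl : ![a, b, c] (Fin.last 2) = c := rfl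
    rw [hi0, hi1, hl] at h
    exact h
  rw [key, key]
  have := hsym.eq p q
  rw [this]

/-- The second derivative along the diagonal kills diagonal directions. -/
lemma diag2_zero (F : V × V → ℝ) (hF : ContDiff ℝ (⊤ : ℕ∞) F)
    (hdF : ∀ x : V, fderiv ℝ F (x, x) = 0) (y b : V) (ξ : V × V) :
    iteratedFDeriv ℝ 2 F (y, y) ![(b, b), ξ] = 0 := by
  have h := key_deriv F hF 1 y b ![ξ]
  have hz : (fun t : ℝ => iteratedFDeriv ℝ 1 F (y + t • b, y + t • b) ![ξ])
      = fun _ => (0 : ℝ) := by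
    funext t
    rw [iteratedFDeriv_one_apply, hdF (y + t • b)]
    rfl
  have : iteratedFDeriv ℝ 2 F (y, y) (Fin.cons ((b, b) : V × V) ![ξ]) = 0 := by
    rw [← h, hz, deriv_const]
  simpa using this

/-- The third derivative along the diagonal kills pairs of diagonal directions. -/
lemma diag3_zero (F : V × V → ℝ) (hF : ContDiff ℝ (⊤ : ℕ∞) F)
    (hdF : ∀ x : V, fderiv ℝ F (x, x) = 0) (x a b : V) (ξ : V × V) :
    iteratedFDeriv ℝ 3 F (x, x) ![(a, a), (b, b), ξ] = 0 := by
  have h := key_deriv F hF 2 x a ![(b, b), ξ]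
  have hz : (fun t : ℝ => iteratedFDeriv ℝ 2 F (x + t • a, x + t • a) ![(b, b), ξ])
      = fun _ => (0 : ℝ) := by
    funext t
    exact diag2_zero F hF hdF (x + t • a) b ξ
  have : iteratedFDeriv ℝ 3 F (x, x) (Fin.cons ((a, a) : V × V) ![(b, b), ξ]) = 0 := by
    rw [← h, hz, deriv_const]
  simpa using this

end Aux

/-- The average of the two dual Christoffel forms induced by a contrast function `F` on
the pair groupoid `V × V` is the Levi-Civita (Koszul) form of the metric
`g^F(x)(u,v) = D²F(x,x)((0,u),(0,v))`, where
`Γ^F(x)(u,v,w) = −D³F(x,x)((0,u),(0,v),(w,0))` and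
`Γ^{F,*}(x)(u,v,w) = −D³F(x,x)((u,0),(v,0),(0,w))`. -/
theorem contrast_levi_civita_koszul
    {V : Type*} [NormedAddCommGroup V] [NormedSpace ℝ V]
    (F : V × V → ℝ) (hF : ContDiff ℝ (⊤ : ℕ∞) F)
    (hF0 : ∀ x : V, F (x, x) = 0) (hdF : ∀ x : V, fderiv ℝ F (x, x) = 0)
    (x u v w : V) :
    (1 / 2 : ℝ) * (-iteratedFDeriv ℝ 3 F (x, x) ![(0, u), (0, v), (w, 0)]
        + -iteratedFDeriv ℝ 3 F (x, x) ![(u, 0), (v, 0), (0, w)])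
      = (1 / 2 : ℝ) *
        (deriv (fun t : ℝ =>
            iteratedFDeriv ℝ 2 F (x + t • u, x + t • u) ![(0, v), (0, w)]) 0
          + deriv (fun t : ℝ =>
            iteratedFDeriv ℝ 2 F (x + t • v, x + t • v) ![(0, u), (0, w)]) 0
          - deriv (fun t : ℝ =>
            iteratedFDeriv ℝ 2 F (x + t • w, x + t • w) ![(0, u), (0, v)]) 0) := by
  have hcons : ∀ a b c : V × V, (Fin.cons a ![b, c] : Fin 3 → V × V) = ![a, b, c] := by
    intro a b c; rfl
  have hkU := key_deriv F hF 2 x u ![((0 : V), v), (0, w)]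
  have hkV := key_deriv F hF 2 x v ![((0 : V), u), (0, w)]
  have hkW := key_deriv F hF 2 x w ![((0 : V), u), (0, v)]
  rw [hcons] at hkU hkV hkW
  rw [hkU, hkV, hkW]
  set T := iteratedFDeriv ℝ 3 F (x, x) with hT
  have hsplit : ∀ a : V, ((a, a) : V × V) = (a, 0) + (0, a) := by
    intro a; simp [Prod.ext_iff]
  have h1 : T ![(u, u), (0, v), (0, w)]
      = T ![(u, 0), (0, v), (0, w)] + T ![(0, u), (0, v), (0, w)] := by
    rw [hsplit u, T_add0]
  have h2 : T ![(v, v), (0, u), (0, w)]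
      = T ![(0, u), (v, 0), (0, w)] + T ![(0, u), (0, v), (0, w)] := by
    rw [hsplit v, T_add0, hT, swap01 F hF _ ((v, 0) : V × V) (0, u) (0, w),
      swap01 F hF _ ((0, v) : V × V) (0, u) (0, w)]
  have h3 : T ![(w, w), (0, u), (0, v)]
      = T ![(0, u), (0, v), (w, 0)] + T ![(0, u), (0, v), (0, w)] := by
    rw [hsplit w, T_add0, hT, swap01 F hF _ ((w, 0) : V × V) (0, u) (0, v),
      swap12 F hF _ ((0, u) : V × V) (w, 0) (0, v),
      swap01 F hF _ ((0, w) : V × V) (0, u) (0, v),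
      swap12 F hF _ ((0, u) : V × V) (0, w) (0, v)]
  have h4 : T ![(u, 0), (v, 0), (0, w)] + T ![(u, 0), (0, v), (0, w)]
      + (T ![(0, u), (v, 0), (0, w)] + T ![(0, u), (0, v), (0, w)]) = 0 := by
    have h0 := diag3_zero F hF hdF x u v ((0 : V), w)
    rw [hsplit u, T_add0] at h0
    rw [hsplit v] at h0
    rw [T_add1, T_add1] at h0
    exact h0
  rw [h1, h2, h3]
  linarith [h4]
end

section
/- Let V be a real normed vector space and let F : V × V → ℝ be a contrast function, with Γ^F and Γ^{F,*} defined as above. Define the three-tensor T^F(x)(u,v,w) := Γ^F(x)(u,v,w) − Γ^{F,*}(x)(u,v,w). Then for all x, u, v, w ∈ V one has T^F(x)(u,v,w) = D³(F − F*)(x,x)((0,u),(0,v),(0,w)), where F*(x,y) = F(y,x), and T^F(x) is a totally symmetric trilinear form: its value is unchanged under every permutation of the arguments u, v, w. In particular, if F = F* then T^F = 0. -/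
set_option linter.unusedSectionVars false
set_option maxHeartbeats 1000000

/-- The skewness tensor `T^F = Γ^F − Γ^{F,*}` of a contrast function `F` on the pair
groupoid `V × V`, where `Γ^F(x)(u,v,w) = −D³F(x,x)((0,u),(0,v),(w,0))` and
`Γ^{F,*}(x)(u,v,w) = −D³F(x,x)((u,0),(v,0),(0,w))`. -/
noncomputable def contrastT {V : Type*} [NormedAddCommGroup V] [NormedSpace ℝ V]
    (F : V × V → ℝ) (x u v w : V) : ℝ :=
  -iteratedFDeriv ℝ 3 F (x, x) ![(0, u), (0, v), (w, 0)]
    - -iteratedFDeriv ℝ 3 F (x, x) ![(u, 0), (v, 0), (0, w)]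

section AuxMulti

variable {W : Type*} [NormedAddCommGroup W] [NormedSpace ℝ W]

private lemma upd0 (a b c z : W) : Function.update ![a, b, c] (0 : Fin 3) z = ![z, b, c] := by
  ext i; fin_cases i <;> simp [Function.update]

private lemma upd1 (a b c z : W) : Function.update ![a, b, c] (1 : Fin 3) z = ![a, z, c] := by
  ext i; fin_cases i <;> simp [Function.update]

private lemma upd2 (a b c z : W) : Function.update ![a, b, c] (2 : Fin 3) z = ![a, b, z] := by
  ext i; fin_cases i <;> simp [Function.update]

private lemma map_add1 (A : ContinuousMultilinearMap ℝ (fun _ : Fin 3 => W) ℝ)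
    (p q b c : W) : A ![p + q, b, c] = A ![p, b, c] + A ![q, b, c] := by
  have h := A.map_update_add ![p, b, c] 0 p q
  rwa [upd0, upd0, upd0] at h

private lemma map_add2 (A : ContinuousMultilinearMap ℝ (fun _ : Fin 3 => W) ℝ)
    (p q b c : W) : A ![b, p + q, c] = A ![b, p, c] + A ![b, q, c] := by
  have h := A.map_update_add ![b, p, c] 1 p q
  rwa [upd1, upd1, upd1] at h

private lemma map_add3 (A : ContinuousMultilinearMap ℝ (fun _ : Fin 3 => W) ℝ)
    (p q b c : W) : A ![b, c, p + q] = A ![b, c, p] + A ![b, c, q] := by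
  have h := A.map_update_add ![b, c, p] 2 p q
  rwa [upd2, upd2, upd2] at h

end AuxMulti

section Aux2
variable {V : Type*} [NormedAddCommGroup V] [NormedSpace ℝ V]
variable {F : V × V → ℝ}

private lemma A_apply (F : V × V → ℝ) (p : V × V) (h1 h2 h3 : V × V) :
    iteratedFDeriv ℝ 3 F p ![h1, h2, h3]
      = fderiv ℝ (fderiv ℝ (fderiv ℝ F)) p h1 h2 h3 := by
  have h := iteratedFDeriv_succ_apply_right (𝕜 := ℝ) (f := F) (x := p) (n := 2) ![h1, h2, h3]
  have hinit : Fin.init ![h1, h2, h3] = ![h1, h2] := by funext i; fin_cases i <;> rfl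
  have hlast : ![h1, h2, h3] (Fin.last 2) = h3 := rfl
  rw [hinit, hlast, iteratedFDeriv_two_apply] at h
  exact h

private lemma s12lem (hF : ContDiff ℝ (⊤ : ℕ∞) F) (p : V × V) (h1 h2 h3 : V × V) :
    iteratedFDeriv ℝ 3 F p ![h1, h2, h3] = iteratedFDeriv ℝ 3 F p ![h2, h1, h3] := by
  rw [A_apply, A_apply]
  have hg : ContDiff ℝ (⊤ : ℕ∞) (fderiv ℝ F) := hF.fderiv_right (by exact_mod_cast le_top)
  have hg' : ContDiff ℝ (⊤ : ℕ∞) (fderiv ℝ (fderiv ℝ F)) :=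
    hg.fderiv_right (by exact_mod_cast le_top)
  have h := second_derivative_symmetric (f := fderiv ℝ F)
    (fun y => (hg.differentiable (by simp) y).hasFDerivAt)
    ((hg'.differentiable (by simp) p).hasFDerivAt) h1 h2
  exact congrFun (congrArg _ h) h3

private lemma s23lem (hF : ContDiff ℝ (⊤ : ℕ∞) F) (p : V × V) (h1 h2 h3 : V × V) :
    iteratedFDeriv ℝ 3 F p ![h1, h2, h3] = iteratedFDeriv ℝ 3 F p ![h1, h3, h2] := by
  rw [A_apply, A_apply]
  have hg : ContDiff ℝ (⊤ : ℕ∞) (fderiv ℝ F) := hF.fderiv_right (by exact_mod_cast le_top)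
  have hg' : ContDiff ℝ (⊤ : ℕ∞) (fderiv ℝ (fderiv ℝ F)) :=
    hg.fderiv_right (by exact_mod_cast le_top)
  have hsym : ∀ q : V × V, fderiv ℝ (fderiv ℝ F) q h2 h3 = fderiv ℝ (fderiv ℝ F) q h3 h2 :=
    fun q => second_derivative_symmetric (f := F)
      (fun y => (hF.differentiable (by simp) y).hasFDerivAt)
      ((hg.differentiable (by simp) q).hasFDerivAt) h2 h3
  have hD : HasFDerivAt (fderiv ℝ (fderiv ℝ F))
      (fderiv ℝ (fderiv ℝ (fderiv ℝ F)) p) p :=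
    (hg'.differentiable (by simp) p).hasFDerivAt
  have key : ∀ a b : V × V, HasFDerivAt (fun q => fderiv ℝ (fderiv ℝ F) q a b)
      ((((ContinuousLinearMap.apply ℝ ℝ b).comp
          (ContinuousLinearMap.apply ℝ (V × V →L[ℝ] ℝ) a)).comp
        (fderiv ℝ (fderiv ℝ (fderiv ℝ F)) p))) p := by
    intro a b
    have := HasFDerivAt.comp (g := ⇑((ContinuousLinearMap.apply ℝ ℝ b).comp
          (ContinuousLinearMap.apply ℝ (V × V →L[ℝ] ℝ) a))) p (ContinuousLinearMap.hasFDerivAt _) hD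
    exact this
  have h0 := (key h2 h3).sub (key h3 h2)
  have hfun : (fun q : V × V =>
        fderiv ℝ (fderiv ℝ F) q h2 h3 - fderiv ℝ (fderiv ℝ F) q h3 h2)
      = fun _ => (0 : ℝ) := funext fun q => by rw [hsym q]; ring
  simp only [Pi.sub_def] at h0
  rw [hfun] at h0
  have hz := h0.unique (hasFDerivAt_const 0 p)
  have happ := ContinuousLinearMap.ext_iff.1 hz h1
  simpa using sub_eq_zero.1 (by simpa using happ)

private lemma hz_lemma (hF : ContDiff ℝ (⊤ : ℕ∞) F)
    (hdF : ∀ x : V, fderiv ℝ F (x, x) = 0) (x a b : V) (h : V × V) :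
    iteratedFDeriv ℝ 3 F (x, x) ![(a, a), (b, b), h] = 0 := by
  have hg : ContDiff ℝ (⊤ : ℕ∞) (fderiv ℝ F) := hF.fderiv_right (by exact_mod_cast le_top)
  set diag : V →L[ℝ] V × V := (ContinuousLinearMap.id ℝ V).prod (ContinuousLinearMap.id ℝ V)
    with hdiag
  have hc := diag.iteratedFDeriv_comp_right hg x (i := 2) (by norm_cast)
  have e2 : (fderiv ℝ F ∘ diag) = fun _ : V => (0 : V × V →L[ℝ] ℝ) := by
    funext y
    have : diag y = (y, y) := rfl
    simp [Function.comp, this, hdF y]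
  have e1 : iteratedFDeriv ℝ 2 (fderiv ℝ F) (x, x) ![(a, a), (b, b)] = 0 := by
    have happ := congrFun (congrArg (fun (M : ContinuousMultilinearMap ℝ
        (fun _ : Fin 2 => V) (V × V →L[ℝ] ℝ)) => (M : (Fin 2 → V) → _)) hc) ![a, b]
    rw [e2, iteratedFDeriv_zero_fun] at happ
    have hv : (fun i => diag (![a, b] i)) = ![(a, a), (b, b)] := by
      funext i; fin_cases i <;> rfl
    simp only [ContinuousMultilinearMap.compContinuousLinearMap_apply] at happ
    rw [hv] at happ
    simpa [show diag x = (x, x) from rfl] using happ.symm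
  have h' := iteratedFDeriv_succ_apply_right (𝕜 := ℝ) (f := F) (x := (x, x)) (n := 2)
    ![(a, a), (b, b), h]
  have hinit : Fin.init ![(a, a), (b, b), h] = ![(a, a), (b, b)] := by
    funext i; fin_cases i <;> rfl
  rw [hinit, e1] at h'
  simpa using h'

/-- The central computation: `T^F(x)(u,v,w) = A((0,u),(0,v),(0,w)) − A((u,0),(v,0),(w,0))`
where `A = D³F(x,x)`. -/
private lemma key_lemma (hF : ContDiff ℝ (⊤ : ℕ∞) F)
    (hdF : ∀ x : V, fderiv ℝ F (x, x) = 0) (x u v w : V) :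
    contrastT F x u v w
      = iteratedFDeriv ℝ 3 F (x, x) ![(0, u), (0, v), (0, w)]
        - iteratedFDeriv ℝ 3 F (x, x) ![(u, 0), (v, 0), (w, 0)] := by
  have s12 := s12lem hF (x, x)
  have s23 := s23lem hF (x, x)
  have s13 : ∀ h1 h2 h3 : V × V, iteratedFDeriv ℝ 3 F (x, x) ![h1, h2, h3]
      = iteratedFDeriv ℝ 3 F (x, x) ![h3, h2, h1] := fun h1 h2 h3 => by
    rw [s12, s23, s12]
  have hz := hz_lemma hF hdF x
  have hz1 : ∀ (a b : V) (h : V × V),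
      iteratedFDeriv ℝ 3 F (x, x) ![h, (a, a), (b, b)] = 0 := fun a b h => by
    rw [s13]; exact hz b a h
  have hz2 : ∀ (a b : V) (h : V × V),
      iteratedFDeriv ℝ 3 F (x, x) ![(a, a), h, (b, b)] = 0 := fun a b h => by
    rw [s23]; exact hz a b h
  have e1 : ∀ (a : V) (b c : V × V), iteratedFDeriv ℝ 3 F (x, x) ![(a, a), b, c]
      = iteratedFDeriv ℝ 3 F (x, x) ![(a, 0), b, c]
        + iteratedFDeriv ℝ 3 F (x, x) ![(0, a), b, c] := fun a b c => by
    rw [show ((a, a) : V × V) = (a, 0) + (0, a) from by simp]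
    exact map_add1 _ _ _ _ _
  have e2 : ∀ (a : V) (b c : V × V), iteratedFDeriv ℝ 3 F (x, x) ![b, (a, a), c]
      = iteratedFDeriv ℝ 3 F (x, x) ![b, (a, 0), c]
        + iteratedFDeriv ℝ 3 F (x, x) ![b, (0, a), c] := fun a b c => by
    rw [show ((a, a) : V × V) = (a, 0) + (0, a) from by simp]
    exact map_add2 _ _ _ _ _
  have e3 : ∀ (a : V) (b c : V × V), iteratedFDeriv ℝ 3 F (x, x) ![b, c, (a, a)]
      = iteratedFDeriv ℝ 3 F (x, x) ![b, c, (a, 0)]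
        + iteratedFDeriv ℝ 3 F (x, x) ![b, c, (0, a)] := fun a b c => by
    rw [show ((a, a) : V × V) = (a, 0) + (0, a) from by simp]
    exact map_add3 _ _ _ _ _
  have r30 := hz u v (w, 0)
  have r31 := hz u v ((0 : V), w)
  have r10 := hz1 v w (u, 0)
  have r11 := hz1 v w ((0 : V), u)
  have r20 := hz2 u w (v, 0)
  have r21 := hz2 u w ((0 : V), v)
  simp only [e1, e2, e3] at r30 r31 r10 r11 r20 r21
  simp only [contrastT]
  linarith [r30, r31, r10, r11, r20, r21]

end Aux2

/-- For a contrast function `F` on `V × V`: the tensor `T^F = Γ^F − Γ^{F,*}` equals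
`D³(F − F*)(x,x)((0,u),(0,v),(0,w))` with `F*(x,y) = F(y,x)`, it is totally symmetric
in `u, v, w`, and it vanishes whenever `F = F*`. -/
theorem contrastT_eq_and_symm_and_vanish
    {V : Type*} [NormedAddCommGroup V] [NormedSpace ℝ V]
    (F : V × V → ℝ) (hF : ContDiff ℝ (⊤ : ℕ∞) F)
    (hF0 : ∀ x : V, F (x, x) = 0) (hdF : ∀ x : V, fderiv ℝ F (x, x) = 0) :
    (∀ x u v w : V,
        contrastT F x u v w
          = iteratedFDeriv ℝ 3 (fun p : V × V => F p - F (p.2, p.1)) (x, x)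
              ![(0, u), (0, v), (0, w)]) ∧
      (∀ (x : V) (a : Fin 3 → V) (σ : Equiv.Perm (Fin 3)),
        contrastT F x (a 0) (a 1) (a 2)
          = contrastT F x (a (σ 0)) (a (σ 1)) (a (σ 2))) ∧
      ((∀ p : V × V, F p = F (p.2, p.1)) → ∀ x u v w : V, contrastT F x u v w = 0) := by
  have part1 : ∀ x u v w : V,
      contrastT F x u v w
        = iteratedFDeriv ℝ 3 (fun p : V × V => F p - F (p.2, p.1)) (x, x)
            ![(0, u), (0, v), (0, w)] := by
    intro x u v w
    rw [key_lemma hF hdF]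
    set sw : V × V →L[ℝ] V × V :=
      (ContinuousLinearMap.snd ℝ V V).prod (ContinuousLinearMap.fst ℝ V V) with hsw
    have hFsw : ContDiff ℝ (⊤ : ℕ∞) (F ∘ sw) := hF.comp sw.contDiff
    have hfun : (fun p : V × V => F p - F (p.2, p.1)) = F + -(F ∘ sw) := by
      funext p
      have : sw p = (p.2, p.1) := rfl
      simp [Function.comp, this, sub_eq_add_neg]
    have h3 : (3 : WithTop ℕ∞) ≤ (⊤ : ℕ∞) := by norm_cast
    have hcomp := sw.iteratedFDeriv_comp_right hF (x, x) (i := 3) (by norm_cast)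
    have hswpt : sw (x, x) = (x, x) := rfl
    have hgneg : ContDiff ℝ 3 (-(F ∘ ⇑sw)) := (hFsw.of_le h3).neg
    rw [hfun, iteratedFDeriv_add_apply (hF.of_le h3).contDiffAt hgneg.contDiffAt,
      ContinuousMultilinearMap.add_apply, iteratedFDeriv_neg_apply,
      ContinuousMultilinearMap.neg_apply, hcomp]
    simp only [ContinuousMultilinearMap.compContinuousLinearMap_apply, hswpt]
    have hv : (fun i => sw (![((0 : V), u), (0, v), (0, w)] i))
        = ![(u, 0), (v, 0), (w, 0)] := by
      funext i; fin_cases i <;> rfl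
    rw [hv]
    ring
  refine ⟨part1, ?_, ?_⟩
  · intro x a σ
    have hT := key_lemma (F := F) hF hdF x
    have t12 : ∀ u v w : V, contrastT F x u v w = contrastT F x v u w := fun u v w => by
      rw [hT, hT, s12lem hF (x, x) ((0 : V), u) (0, v) (0, w),
        s12lem hF (x, x) (u, (0 : V)) (v, 0) (w, 0)]
    have t23 : ∀ u v w : V, contrastT F x u v w = contrastT F x u w v := fun u v w => by
      rw [hT, hT, s23lem hF (x, x) ((0 : V), u) (0, v) (0, w),
        s23lem hF (x, x) (u, (0 : V)) (v, 0) (w, 0)]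
    have t13 : ∀ u v w : V, contrastT F x u v w = contrastT F x w v u := fun u v w =>
      ((t12 u v w).trans (t23 v u w)).trans (t12 v w u)
    have tr1 : ∀ u v w : V, contrastT F x u v w = contrastT F x v w u := fun u v w =>
      (t12 u v w).trans (t23 v u w)
    have tr2 : ∀ u v w : V, contrastT F x u v w = contrastT F x w u v := fun u v w =>
      (tr1 u v w).trans (tr1 v w u)
    have tri : ∀ i : Fin 3, i = 0 ∨ i = 1 ∨ i = 2 := by decide
    rcases tri (σ 0) with h0 | h0 | h0 <;> rcases tri (σ 1) with h1 | h1 | h1 <;>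
      rcases tri (σ 2) with h2 | h2 | h2 <;> rw [h0, h1, h2] <;>
      first
        | exact absurd (σ.injective (h0.trans h1.symm)) (by decide)
        | exact absurd (σ.injective (h0.trans h2.symm)) (by decide)
        | exact absurd (σ.injective (h1.trans h2.symm)) (by decide)
        | rfl
        | exact t12 _ _ _
        | exact t23 _ _ _
        | exact t13 _ _ _
        | exact tr1 _ _ _
        | exact tr2 _ _ _
  · intro hsymF x u v w
    rw [part1 x u v w]
    have : (fun p : V × V => F p - F (p.2, p.1)) = fun _ => (0 : ℝ) :=
      funext fun p => by rw [hsymF p]; ring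
    rw [this, iteratedFDeriv_zero_fun]
    simp
end

section
/- Let n ≥ 1 and for A ∈ M_n(ℝ) set F(A) := tr((1 − A)(1 − A)ᵀ), where 1 is the identity matrix and ᵀ is the transpose. Then for all X, Y ∈ M_n(ℝ), the mixed second derivative ∂²/∂s∂t [ F(exp(sX)·exp(tY)) ] evaluated at s = t = 0 equals 2·tr(X·Yᵀ). -/
open Matrix

attribute [local instance] Matrix.linftyOpNormedRing Matrix.linftyOpNormedAlgebra

/-- trace as a continuous linear map -/
noncomputable def trCLM (n : ℕ) : Matrix (Fin n) (Fin n) ℝ →L[ℝ] ℝ :=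
  (Matrix.traceLinearMap (Fin n) ℝ ℝ).toContinuousLinearMap

/-- transpose as a continuous linear map -/
noncomputable def trnCLM (n : ℕ) :
    Matrix (Fin n) (Fin n) ℝ →L[ℝ] Matrix (Fin n) (Fin n) ℝ :=
  ((Matrix.transposeLinearEquiv (Fin n) (Fin n) ℝ ℝ).toLinearMap).toContinuousLinearMap

theorem hd_trace {n : ℕ} {f : ℝ → Matrix (Fin n) (Fin n) ℝ} {f' : Matrix (Fin n) (Fin n) ℝ}
    {t : ℝ} (hf : HasDerivAt f f' t) :
    HasDerivAt (fun u => Matrix.trace (f u)) (Matrix.trace f') t :=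
  (trCLM n).hasFDerivAt.comp_hasDerivAt t hf

theorem hd_transpose {n : ℕ} {f : ℝ → Matrix (Fin n) (Fin n) ℝ} {f' : Matrix (Fin n) (Fin n) ℝ}
    {t : ℝ} (hf : HasDerivAt f f' t) :
    HasDerivAt (fun u => (f u)ᵀ) f'ᵀ t :=
  (trnCLM n).hasFDerivAt.comp_hasDerivAt t hf

theorem inner_deriv {n : ℕ} (X Y : Matrix (Fin n) (Fin n) ℝ) (s : ℝ) :
    deriv (fun t : ℝ =>
        Matrix.trace ((1 - NormedSpace.exp (s • X) * NormedSpace.exp (t • Y)) *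
          (1 - NormedSpace.exp (s • X) * NormedSpace.exp (t • Y))ᵀ)) 0
    = Matrix.trace (-(NormedSpace.exp (s • X) * Y) * (1 - NormedSpace.exp (s • X))ᵀ
        + (1 - NormedSpace.exp (s • X)) * (-(NormedSpace.exp (s • X) * Y))ᵀ) := by
  set E := NormedSpace.exp (s • X)
  have hexp : HasDerivAt (fun t : ℝ => NormedSpace.exp (t • Y))
      (NormedSpace.exp ((0:ℝ) • Y) * Y) 0 := hasDerivAt_exp_smul_const Y 0
  have hA : HasDerivAt (fun t : ℝ => E * NormedSpace.exp (t • Y)) (E * Y) 0 := by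
    have h := hexp.const_mul E
    simp [zero_smul, NormedSpace.exp_zero] at h
    exact h
  have hB : HasDerivAt (fun t : ℝ => 1 - E * NormedSpace.exp (t • Y)) (-(E * Y)) 0 := by
    have h := (hasDerivAt_const 0 (1 : Matrix (Fin n) (Fin n) ℝ)).sub hA
    simp at h
    exact h
  have hM := hB.mul (hd_transpose hB)
  have := hd_trace hM
  have h0 : (fun t : ℝ => 1 - E * NormedSpace.exp (t • Y)) 0 = 1 - E := by
    simp [zero_smul, NormedSpace.exp_zero]
  refine this.deriv.trans ?_
  simp [h0]

/-- For the contrast function `F(A) = tr((1 − A)(1 − A)ᵀ)` on `GL(n, ℝ)`, the induced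
metric on the Lie algebra `gl(n, ℝ)` is `g^F(X,Y) = X^L Y^L F(I) = 2 tr(X Yᵀ)`. -/
theorem contrast_GL_metric (n : ℕ) (hn : 1 ≤ n)
    (X Y : Matrix (Fin n) (Fin n) ℝ) :
    deriv (fun s : ℝ => deriv (fun t : ℝ =>
        Matrix.trace ((1 - NormedSpace.exp (s • X) * NormedSpace.exp (t • Y)) *
          (1 - NormedSpace.exp (s • X) * NormedSpace.exp (t • Y))ᵀ)) 0) 0
      = 2 * Matrix.trace (X * Yᵀ) := by
  have heq : (fun s : ℝ => deriv (fun t : ℝ =>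
        Matrix.trace ((1 - NormedSpace.exp (s • X) * NormedSpace.exp (t • Y)) *
          (1 - NormedSpace.exp (s • X) * NormedSpace.exp (t • Y))ᵀ)) 0)
      = fun s : ℝ =>
        Matrix.trace (-(NormedSpace.exp (s • X) * Y) * (1 - NormedSpace.exp (s • X))ᵀ
          + (1 - NormedSpace.exp (s • X)) * (-(NormedSpace.exp (s • X) * Y))ᵀ) :=
    funext fun s => inner_deriv X Y s
  rw [heq]
  have hP : HasDerivAt (fun s : ℝ => NormedSpace.exp (s • X)) X 0 := by
    have h := hasDerivAt_exp_smul_const (𝕂 := ℝ) X 0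
    simp [zero_smul, NormedSpace.exp_zero] at h
    exact h
  have hPY : HasDerivAt (fun s : ℝ => -(NormedSpace.exp (s • X) * Y)) (-(X * Y)) 0 :=
    (hP.mul_const Y).neg
  have h1P : HasDerivAt (fun s : ℝ => 1 - NormedSpace.exp (s • X)) (-X) 0 := by
    have h := (hasDerivAt_const 0 (1 : Matrix (Fin n) (Fin n) ℝ)).sub hP
    simp at h
    exact h
  have hT1 := hPY.mul (hd_transpose h1P)
  have hT2 := h1P.mul (hd_transpose hPY)
  have hsum := hd_trace (hT1.add hT2)
  refine hsum.deriv.trans ?_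
  have e0 : NormedSpace.exp ((0:ℝ) • X) = 1 := by
    simp [zero_smul, NormedSpace.exp_zero]
  simp only [e0, sub_self, transpose_zero, mul_zero, zero_mul, mul_one, one_mul,
    transpose_neg, transpose_mul, transpose_one, add_zero, zero_add, neg_mul, mul_neg,
    neg_neg, neg_zero, Matrix.trace_zero, Matrix.trace_add]
  have h1 : Matrix.trace (Y * Xᵀ) = Matrix.trace (X * Yᵀ) := by
    rw [← Matrix.trace_transpose (Y * Xᵀ), transpose_mul, transpose_transpose]
  rw [h1]; ring
end

section
/- Let n ≥ 1 and for U ∈ M_n(ℂ) set F(U) := tr((1 − U)(1 − U)†), where † denotes the conjugate transpose. Then for all skew-Hermitian matrices X, Y ∈ M_n(ℂ) (i.e. X† = −X and Y† = −Y), the mixed second derivative ∂²/∂s∂t [ F(exp(sX)·exp(tY)) ] evaluated at s = t = 0 equals −2·tr(X·Y). -/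
open Matrix

attribute [local instance] Matrix.linftyOpSemiNormedRing Matrix.linftyOpNormedRing
  Matrix.linftyOpNormedAlgebra

namespace ContrastAux

variable {n : ℕ}

/-- `exp A * exp (-A) = 1`. -/
lemma exp_mul_exp_neg (A : Matrix (Fin n) (Fin n) ℂ) :
    NormedSpace.exp A * NormedSpace.exp (-A) = 1 := by
  rw [← Matrix.exp_add_of_commute A (-A) (Commute.neg_right (Commute.refl A)),
    add_neg_cancel, NormedSpace.exp_zero]

/-- conjTranspose of a real-scalar multiple. -/
lemma conjT_real_smul (s : ℝ) (A : Matrix (Fin n) (Fin n) ℂ) :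
    (s • A)ᴴ = s • Aᴴ := by
  ext i j
  simp [Matrix.conjTranspose_apply, Matrix.smul_apply, Complex.real_smul]

/-- key derivative lemma. -/
lemma hasDerivAt_trace_mul_exp (A B : Matrix (Fin n) (Fin n) ℂ) :
    HasDerivAt (fun t : ℝ => Matrix.trace (A * NormedSpace.exp (t • B)))
      (Matrix.trace (A * B)) 0 := by
  have hexp : HasDerivAt (fun t : ℝ => NormedSpace.exp (t • B)) B 0 := by
    have := hasDerivAt_exp_smul_const (𝕂 := ℝ) B (0 : ℝ)
    simp [NormedSpace.exp_zero] at this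
    exact this
  let l : Matrix (Fin n) (Fin n) ℂ →ₗ[ℝ] ℂ :=
    { toFun := fun M => Matrix.trace (A * M)
      map_add' := fun M N => by simp [Matrix.mul_add]
      map_smul' := fun r M => by
        simp [Matrix.mul_smul, Matrix.trace_smul] }
  let L : Matrix (Fin n) (Fin n) ℂ →L[ℝ] ℂ := l.toContinuousLinearMap
  have := (L.hasFDerivAt (x := NormedSpace.exp ((0:ℝ) • B))).comp_hasDerivAt 0 hexp
  simp [L, l] at this
  exact this

end ContrastAux

open ContrastAux

/-- For the contrast function `F(U) = tr((1 − U)(1 − U)†)` on the unitary group `U(n)`,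
the induced metric on the Lie algebra `u(n)` of skew-Hermitian matrices is
`g^F(X,Y) = X^L Y^L F(I) = −2 tr(X Y)`. -/
theorem contrast_unitary_metric (n : ℕ) (hn : 1 ≤ n)
    (X Y : Matrix (Fin n) (Fin n) ℂ) (hX : Xᴴ = -X) (hY : Yᴴ = -Y) :
    deriv (fun s : ℝ => deriv (fun t : ℝ =>
        Matrix.trace ((1 - NormedSpace.exp (s • X) * NormedSpace.exp (t • Y)) *
          (1 - NormedSpace.exp (s • X) * NormedSpace.exp (t • Y))ᴴ)) 0) 0
      = -2 * Matrix.trace (X * Y) := by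
  -- Step 1: rewrite the inner function
  have hEH : ∀ s t : ℝ, (NormedSpace.exp (s • X) * NormedSpace.exp (t • Y))ᴴ
      = NormedSpace.exp (t • (-Y)) * NormedSpace.exp (s • (-X)) := by
    intro s t
    rw [Matrix.conjTranspose_mul, ← Matrix.exp_conjTranspose, ← Matrix.exp_conjTranspose,
      conjT_real_smul, conjT_real_smul, hX, hY]
  have hprod : ∀ s t : ℝ,
      (NormedSpace.exp (s • X) * NormedSpace.exp (t • Y)) *
        (NormedSpace.exp (t • (-Y)) * NormedSpace.exp (s • (-X))) = 1 := by
    intro s t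
    have h1 : NormedSpace.exp (t • Y) * NormedSpace.exp (t • (-Y)) = 1 := by
      have := exp_mul_exp_neg (t • Y)
      simpa [smul_neg] using this
    have h2 : NormedSpace.exp (s • X) * NormedSpace.exp (s • (-X)) = 1 := by
      have := exp_mul_exp_neg (s • X)
      simpa [smul_neg] using this
    calc (NormedSpace.exp (s • X) * NormedSpace.exp (t • Y)) *
          (NormedSpace.exp (t • (-Y)) * NormedSpace.exp (s • (-X)))
        = NormedSpace.exp (s • X) * (NormedSpace.exp (t • Y) *
            NormedSpace.exp (t • (-Y))) * NormedSpace.exp (s • (-X)) := by noncomm_ring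
      _ = 1 := by rw [h1, mul_one, h2]
  have hinner : ∀ s t : ℝ,
      Matrix.trace ((1 - NormedSpace.exp (s • X) * NormedSpace.exp (t • Y)) *
          (1 - NormedSpace.exp (s • X) * NormedSpace.exp (t • Y))ᴴ)
      = (2 * n : ℂ) - Matrix.trace (NormedSpace.exp (s • X) * NormedSpace.exp (t • Y))
          - Matrix.trace (NormedSpace.exp (s • (-X)) * NormedSpace.exp (t • (-Y))) := by
    intro s t
    set E := NormedSpace.exp (s • X) * NormedSpace.exp (t • Y) with hE
    have h1 : (1 - E) * (1 - E)ᴴ = 1 - Eᴴ - E + E * Eᴴ := by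
      rw [Matrix.conjTranspose_sub, Matrix.conjTranspose_one]
      noncomm_ring
    rw [h1, hEH s t]
    rw [hprod s t]
    have htr : Matrix.trace (NormedSpace.exp (t • (-Y)) * NormedSpace.exp (s • (-X)))
        = Matrix.trace (NormedSpace.exp (s • (-X)) * NormedSpace.exp (t • (-Y))) :=
      Matrix.trace_mul_comm _ _
    rw [Matrix.trace_add, Matrix.trace_sub, Matrix.trace_sub, Matrix.trace_one, htr]
    simp [Fintype.card_fin]
    push_cast
    ring
  -- Step 2: compute inner derivative
  have hderiv_inner : ∀ s : ℝ,
      deriv (fun t : ℝ =>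
        Matrix.trace ((1 - NormedSpace.exp (s • X) * NormedSpace.exp (t • Y)) *
          (1 - NormedSpace.exp (s • X) * NormedSpace.exp (t • Y))ᴴ)) 0
      = - Matrix.trace (Y * NormedSpace.exp (s • X))
        + Matrix.trace (Y * NormedSpace.exp (s • (-X))) := by
    intro s
    have h1 := hasDerivAt_trace_mul_exp (NormedSpace.exp (s • X)) Y
    have h2 := hasDerivAt_trace_mul_exp (NormedSpace.exp (s • (-X))) (-Y)
    have h3 : HasDerivAt (fun t : ℝ =>
        (2 * n : ℂ) - Matrix.trace (NormedSpace.exp (s • X) * NormedSpace.exp (t • Y))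
          - Matrix.trace (NormedSpace.exp (s • (-X)) * NormedSpace.exp (t • (-Y))))
        (- Matrix.trace (Y * NormedSpace.exp (s • X))
          + Matrix.trace (Y * NormedSpace.exp (s • (-X)))) 0 := by
      have := ((hasDerivAt_const (0:ℝ) (2 * n : ℂ)).sub h1).sub h2
      convert this using 1
      · rfl
      · rfl
      rw [Matrix.trace_mul_comm (NormedSpace.exp (s • X)) Y,
        Matrix.mul_neg, Matrix.trace_neg,
        Matrix.trace_mul_comm (NormedSpace.exp (s • (-X))) Y]
      ring
    have : (fun t : ℝ =>
        Matrix.trace ((1 - NormedSpace.exp (s • X) * NormedSpace.exp (t • Y)) *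
          (1 - NormedSpace.exp (s • X) * NormedSpace.exp (t • Y))ᴴ))
        = fun t : ℝ =>
        (2 * n : ℂ) - Matrix.trace (NormedSpace.exp (s • X) * NormedSpace.exp (t • Y))
          - Matrix.trace (NormedSpace.exp (s • (-X)) * NormedSpace.exp (t • (-Y))) :=
      funext fun t => hinner s t
    rw [this, h3.deriv]
  -- Step 3: outer derivative
  have houter : (fun s : ℝ => deriv (fun t : ℝ =>
      Matrix.trace ((1 - NormedSpace.exp (s • X) * NormedSpace.exp (t • Y)) *
        (1 - NormedSpace.exp (s • X) * NormedSpace.exp (t • Y))ᴴ)) 0)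
      = fun s : ℝ => - Matrix.trace (Y * NormedSpace.exp (s • X))
        + Matrix.trace (Y * NormedSpace.exp (s • (-X))) :=
    funext hderiv_inner
  rw [houter]
  have h1 := hasDerivAt_trace_mul_exp Y X
  have h2 := hasDerivAt_trace_mul_exp Y (-X)
  have h3 : HasDerivAt (fun s : ℝ => - Matrix.trace (Y * NormedSpace.exp (s • X))
      + Matrix.trace (Y * NormedSpace.exp (s • (-X))))
      (-2 * Matrix.trace (X * Y)) 0 := by
    have := h1.neg.add h2
    convert this using 1
    · rfl
    · rfl
    rw [Matrix.mul_neg, Matrix.trace_neg, Matrix.trace_mul_comm X Y]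
    ring
  exact h3.deriv
end

section
/- Let n ≥ 1 and for U ∈ M_n(ℂ) set F(U) := tr((1 − U)(1 − U)†), where † denotes the conjugate transpose. Then for all skew-Hermitian matrices X, Y, Z ∈ M_n(ℂ), the iterated third derivative ∂³/∂s∂t∂u [ F(exp(uZ)·exp(sX)·exp(tY)) ] evaluated at s = t = u = 0 equals −tr((X·Y − Y·X)·Z). -/
open Matrix

private lemma keyDeriv {n : ℕ} (A B W : Matrix (Fin n) (Fin n) ℂ) :
    HasDerivAt (fun u : ℝ => Matrix.trace (A * NormedSpace.exp (u • W) * B))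
      (Matrix.trace (A * W * B)) 0 := by
  letI : SeminormedRing (Matrix (Fin n) (Fin n) ℂ) := Matrix.linftyOpSemiNormedRing
  letI : NormedRing (Matrix (Fin n) (Fin n) ℂ) := Matrix.linftyOpNormedRing
  letI : NormedAlgebra ℝ (Matrix (Fin n) (Fin n) ℂ) := Matrix.linftyOpNormedAlgebra
  have h : HasDerivAt (fun u : ℝ => NormedSpace.exp (u • W)) W 0 := by
    have h0 := hasDerivAt_exp_smul_const (𝕂 := ℝ) W 0
    simp only [zero_smul, NormedSpace.exp_zero, one_mul] at h0
    exact h0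
  let L : Matrix (Fin n) (Fin n) ℂ →ₗ[ℝ] ℂ :=
    (Matrix.traceLinearMap (Fin n) ℝ ℂ) ∘ₗ ((LinearMap.mulRight ℂ B).restrictScalars ℝ) ∘ₗ
      ((LinearMap.mulLeft ℂ A).restrictScalars ℝ)
  have := (LinearMap.toContinuousLinearMap L).hasFDerivAt.comp_hasDerivAt 0 h
  simp [L, Function.comp] at this
  exact this

private lemma expCT {n : ℕ} {W : Matrix (Fin n) (Fin n) ℂ} (hW : Wᴴ = -W) (u : ℝ) :
    (NormedSpace.exp (u • W))ᴴ = NormedSpace.exp (u • (-W)) := by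
  rw [← Matrix.exp_conjTranspose]
  congr 1
  rw [Matrix.conjTranspose_smul, hW]
  norm_num

private lemma expUnit {n : ℕ} (W : Matrix (Fin n) (Fin n) ℂ) (u : ℝ) :
    NormedSpace.exp (u • (-W)) * NormedSpace.exp (u • W) = 1 := by
  letI : SeminormedRing (Matrix (Fin n) (Fin n) ℂ) := Matrix.linftyOpSemiNormedRing
  letI : NormedRing (Matrix (Fin n) (Fin n) ℂ) := Matrix.linftyOpNormedRing
  letI : NormedAlgebra ℝ (Matrix (Fin n) (Fin n) ℂ) := Matrix.linftyOpNormedAlgebra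
  rw [← Matrix.exp_add_of_commute]
  · simp
  · simp [smul_neg]

/-- For the contrast function `F(U) = tr((1 − U)(1 − U)†)` on the unitary group `U(n)`,
one has `X^L Y^L Z^R F(I) = − tr([X,Y] Z)` for skew-Hermitian `X, Y, Z`, which shows
that the induced connection is `∇^F_X Y = (1/2)[X,Y]`, the Levi-Civita connection of
the bi-invariant metric `g(X,Y) = −2 tr(XY)` on `u(n)`. -/
theorem contrast_unitary_connection (n : ℕ) (hn : 1 ≤ n)
    (X Y Z : Matrix (Fin n) (Fin n) ℂ) (hX : Xᴴ = -X) (hY : Yᴴ = -Y) (hZ : Zᴴ = -Z) :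
    deriv (fun s : ℝ => deriv (fun t : ℝ => deriv (fun u : ℝ =>
        Matrix.trace
          ((1 - NormedSpace.exp (u • Z) * NormedSpace.exp (s • X) *
              NormedSpace.exp (t • Y)) *
            (1 - NormedSpace.exp (u • Z) * NormedSpace.exp (s • X) *
              NormedSpace.exp (t • Y))ᴴ)) 0) 0) 0
      = -Matrix.trace ((X * Y - Y * X) * Z) := by
  -- Step 1: compute the innermost derivative (in `u`).
  have step1 : ∀ s t : ℝ,
      deriv (fun u : ℝ =>
        Matrix.trace
          ((1 - NormedSpace.exp (u • Z) * NormedSpace.exp (s • X) *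
              NormedSpace.exp (t • Y)) *
            (1 - NormedSpace.exp (u • Z) * NormedSpace.exp (s • X) *
              NormedSpace.exp (t • Y))ᴴ)) 0
      = Matrix.trace ((NormedSpace.exp (s • X) * NormedSpace.exp (t • Y))ᴴ * Z)
        - Matrix.trace (Z * (NormedSpace.exp (s • X) * NormedSpace.exp (t • Y))) := by
    intro s t
    set P : Matrix (Fin n) (Fin n) ℂ :=
      NormedSpace.exp (s • X) * NormedSpace.exp (t • Y) with hP
    have hfun : ∀ u : ℝ,
        Matrix.trace
          ((1 - NormedSpace.exp (u • Z) * NormedSpace.exp (s • X) *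
              NormedSpace.exp (t • Y)) *
            (1 - NormedSpace.exp (u • Z) * NormedSpace.exp (s • X) *
              NormedSpace.exp (t • Y))ᴴ)
        = (n : ℂ) - Matrix.trace (Pᴴ * NormedSpace.exp (u • (-Z)) * 1)
            - Matrix.trace (1 * NormedSpace.exp (u • Z) * P)
            + Matrix.trace (Pᴴ * P) := by
      intro u
      have hM : NormedSpace.exp (u • Z) * NormedSpace.exp (s • X) *
          NormedSpace.exp (t • Y) = NormedSpace.exp (u • Z) * P := by
        rw [hP, mul_assoc]
      rw [hM]
      have hct : (NormedSpace.exp (u • Z) * P)ᴴ = Pᴴ * NormedSpace.exp (u • (-Z)) := by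
        rw [conjTranspose_mul, expCT hZ u]
      have huu : Matrix.trace (NormedSpace.exp (u • Z) * P *
          (Pᴴ * NormedSpace.exp (u • (-Z)))) = Matrix.trace (Pᴴ * P) := by
        rw [Matrix.trace_mul_comm, mul_assoc, ← mul_assoc (NormedSpace.exp (u • (-Z))),
          expUnit, one_mul]
      rw [conjTranspose_sub, conjTranspose_one, hct, sub_mul, mul_sub, mul_sub, one_mul,
        mul_one, trace_sub, trace_sub, trace_sub, trace_one, huu, Fintype.card_fin]
      simp only [one_mul, mul_one]
      ring
    have h1 := keyDeriv Pᴴ 1 (-Z)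
    have h2 := keyDeriv 1 P Z
    have H := (((hasDerivAt_const (0 : ℝ) ((n : ℂ))).sub h1).sub h2).add
      (hasDerivAt_const (0 : ℝ) (Matrix.trace (Pᴴ * P)))
    have H' : HasDerivAt (fun u : ℝ =>
        (n : ℂ) - Matrix.trace (Pᴴ * NormedSpace.exp (u • (-Z)) * 1)
          - Matrix.trace (1 * NormedSpace.exp (u • Z) * P)
          + Matrix.trace (Pᴴ * P))
        (Matrix.trace (Pᴴ * Z) - Matrix.trace (Z * P)) 0 := by
      convert H using 1
      · rfl
      · rfl
      simp [Matrix.trace_neg]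
      try ring
    have := H'.deriv
    rw [funext hfun, this]
  simp only [step1]
  -- Step 2: compute the middle derivative (in `t`).
  have step2 : ∀ s : ℝ,
      deriv (fun t : ℝ =>
        Matrix.trace ((NormedSpace.exp (s • X) * NormedSpace.exp (t • Y))ᴴ * Z)
        - Matrix.trace (Z * (NormedSpace.exp (s • X) * NormedSpace.exp (t • Y)))) 0
      = -Matrix.trace (Y * NormedSpace.exp (s • (-X)) * Z)
        - Matrix.trace (Z * NormedSpace.exp (s • X) * Y) := by
    intro s
    have hfun : ∀ t : ℝ,
        Matrix.trace ((NormedSpace.exp (s • X) * NormedSpace.exp (t • Y))ᴴ * Z)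
          - Matrix.trace (Z * (NormedSpace.exp (s • X) * NormedSpace.exp (t • Y)))
        = Matrix.trace (1 * NormedSpace.exp (t • (-Y)) * (NormedSpace.exp (s • (-X)) * Z))
          - Matrix.trace ((Z * NormedSpace.exp (s • X)) * NormedSpace.exp (t • Y) * 1) := by
      intro t
      rw [conjTranspose_mul, expCT hX s, expCT hY t]
      rw [one_mul, mul_one, mul_assoc, mul_assoc]
    have h1 := keyDeriv (1 : Matrix (Fin n) (Fin n) ℂ)
      (NormedSpace.exp (s • (-X)) * Z) (-Y)
    have h2 := keyDeriv (Z * NormedSpace.exp (s • X)) (1 : Matrix (Fin n) (Fin n) ℂ) Y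
    have H' : HasDerivAt (fun t : ℝ =>
        Matrix.trace (1 * NormedSpace.exp (t • (-Y)) * (NormedSpace.exp (s • (-X)) * Z))
          - Matrix.trace ((Z * NormedSpace.exp (s • X)) * NormedSpace.exp (t • Y) * 1))
        (-Matrix.trace (Y * NormedSpace.exp (s • (-X)) * Z)
          - Matrix.trace (Z * NormedSpace.exp (s • X) * Y)) 0 := by
      convert h1.sub h2 using 1
      · rfl
      · rfl
      simp [Matrix.trace_neg, mul_assoc]
    have := H'.deriv
    rw [funext hfun, this]
  simp only [step2]
  -- Step 3: compute the outer derivative (in `s`).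
  have h1 := keyDeriv Y Z (-X)
  have h2 := keyDeriv Z Y X
  have H' : HasDerivAt (fun s : ℝ =>
      -Matrix.trace (Y * NormedSpace.exp (s • (-X)) * Z)
        - Matrix.trace (Z * NormedSpace.exp (s • X) * Y))
      (Matrix.trace (Y * X * Z) - Matrix.trace (Z * X * Y)) 0 := by
    convert h1.neg.sub h2 using 1
    · rfl
    · rfl
    simp [Matrix.trace_neg]
  rw [H'.deriv]
  have hc : Matrix.trace (Z * X * Y) = Matrix.trace (X * Y * Z) := by
    rw [mul_assoc, Matrix.trace_mul_comm]
  rw [hc, sub_mul, trace_sub]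
  ring
end

section
/- Let H be a complex inner product space and define F(φ,ψ) := 1 − |⟨φ,ψ⟩|² / (‖φ‖²·‖ψ‖²) for nonzero φ, ψ ∈ H. Then for every nonzero φ ∈ H and every x ∈ H, the second derivative at t = 0 of the real function t ↦ F(φ + t·x, φ) equals (2·‖x‖²·‖φ‖² − 2·|⟨x,φ⟩|²) / ‖φ‖⁴. -/
open scoped InnerProductSpace

/-- The quantum contrast function `F(φ,ψ) = 1 − |⟨φ,ψ⟩|²/(‖φ‖²‖ψ‖²)` on
`(H ∖ {0}) × (H ∖ {0})`. -/
noncomputable def quantumContrast {H : Type*} [NormedAddCommGroup H]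
    [InnerProductSpace ℂ H] (φ ψ : H) : ℝ :=
  1 - ‖⟪φ, ψ⟫_ℂ‖ ^ 2 / (‖φ‖ ^ 2 * ‖ψ‖ ^ 2)

private lemma hasDerivAt_quad (u v w t : ℝ) :
    HasDerivAt (fun s : ℝ => u + s * v + s ^ 2 * w) (v + 2 * t * w) t := by
  have h := ((hasDerivAt_const t u).add ((hasDerivAt_id t).mul_const v)).add
    ((hasDerivAt_pow 2 t).mul_const w)
  exact h.congr_deriv (by norm_num)

private lemma hasDerivAt_lin (u w t : ℝ) :
    HasDerivAt (fun s : ℝ => u + 2 * s * w) (2 * w) t := by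
  have h := (hasDerivAt_const t u).add (((hasDerivAt_id t).const_mul 2).mul_const w)
  exact h.congr_deriv (by ring)

/-- The symmetric 2-form induced by the quantum contrast function
`F(φ,ψ) = 1 − |⟨φ,ψ⟩|²/(‖φ‖²‖ψ‖²)`: the second derivative at `t = 0` of
`t ↦ F(φ + t·x, φ)` equals `(2‖x‖²‖φ‖² − 2|⟨x,φ⟩|²)/‖φ‖⁴`; after reduction this is
(a multiple of) the Fubini–Study metric on the projective space of `H`. -/
theorem quantumContrast_second_deriv {H : Type*} [NormedAddCommGroup H]
    [InnerProductSpace ℂ H] (φ x : H) (hφ : φ ≠ 0) :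
    iteratedDeriv 2 (fun t : ℝ => quantumContrast (φ + t • x) φ) 0
      = (2 * ‖x‖ ^ 2 * ‖φ‖ ^ 2 - 2 * ‖⟪x, φ⟫_ℂ‖ ^ 2) / ‖φ‖ ^ 4 := by
  have hnφ : ‖φ‖ ≠ 0 := norm_ne_zero_iff.2 hφ
  set a : ℝ := ‖φ‖ ^ 2 with ha
  have ha0 : a ≠ 0 := pow_ne_zero _ hnφ
  set b : ℂ := ⟪x, φ⟫_ℂ with hb
  set r : ℝ := b.re with hr
  set m : ℝ := ‖b‖ ^ 2 with hm
  set c : ℝ := ‖x‖ ^ 2 with hc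
  set P : ℝ → ℝ := fun t => a ^ 2 + t * (2 * a * r) + t ^ 2 * m with hP
  set Q : ℝ → ℝ := fun t => a ^ 2 + t * (2 * a * r) + t ^ 2 * (a * c) with hQ
  have hm' : m = b.re ^ 2 + b.im ^ 2 := by
    rw [hm, Complex.sq_norm, Complex.normSq_apply]; ring
  -- the function is globally equal to a rational function
  have hfun : (fun t : ℝ => quantumContrast (φ + t • x) φ) = fun t => 1 - P t / Q t := by
    funext t
    have hinner : ⟪φ + t • x, φ⟫_ℂ = ((a : ℝ) : ℂ) + (t : ℂ) * b := by
      rw [inner_add_left, show t • x = (t : ℂ) • x from (Complex.coe_smul t x).symm,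
        inner_smul_left, inner_self_eq_norm_sq_to_K, hb, Complex.conj_ofReal]
      norm_cast
    have hnum : ‖⟪φ + t • x, φ⟫_ℂ‖ ^ 2 = P t := by
      rw [hinner, hP, Complex.sq_norm, Complex.normSq_apply]
      simp only [Complex.add_re, Complex.add_im, Complex.mul_re, Complex.mul_im,
        Complex.ofReal_re, Complex.ofReal_im, hm']
      rw [hr]; ring
    have hden : ‖φ + t • x‖ ^ 2 * ‖φ‖ ^ 2 = Q t := by
      have h1 : ‖φ + t • x‖ ^ 2 = ‖φ‖ ^ 2 + 2 * (⟪φ, t • x⟫_ℂ).re + ‖t • x‖ ^ 2 :=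
        norm_add_sq (𝕜 := ℂ) φ (t • x)
      have h2 : (⟪φ, t • x⟫_ℂ).re = t * r := by
        rw [show t • x = (t : ℂ) • x from (Complex.coe_smul t x).symm, inner_smul_right,
          show ⟪φ, x⟫_ℂ = starRingEnd ℂ b by rw [hb, inner_conj_symm]]
        simp [hr, Complex.mul_re]
      have h3 : ‖t • x‖ ^ 2 = t ^ 2 * c := by
        rw [norm_smul, Real.norm_eq_abs, mul_pow, sq_abs, hc]
      rw [h1, h2, h3, hQ, ← ha]; ring
    rw [quantumContrast, hnum, hden]
  rw [hfun]
  -- derivative on a neighborhood of 0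
  have hQ0 : Q 0 = a ^ 2 := by simp [hQ]
  have hQ0ne : Q 0 ≠ 0 := by rw [hQ0]; exact pow_ne_zero _ ha0
  have hQcont : ContinuousAt Q 0 := by fun_prop
  have hopen : ∀ᶠ t in nhds (0 : ℝ), Q t ≠ 0 := hQcont.eventually_ne hQ0ne
  set g : ℝ → ℝ := fun t =>
    -(((2 * a * r + 2 * t * m) * Q t - P t * (2 * a * r + 2 * t * (a * c))) / Q t ^ 2)
    with hg
  have hfd : ∀ t : ℝ, Q t ≠ 0 → HasDerivAt (fun s => 1 - P s / Q s) (g t) t := by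
    intro t ht
    have h := ((hasDerivAt_quad (a ^ 2) (2 * a * r) m t).div
      (hasDerivAt_quad (a ^ 2) (2 * a * r) (a * c) t) ht).const_sub 1
    exact h
  have hderiv_eq : deriv (fun s => 1 - P s / Q s) =ᶠ[nhds (0 : ℝ)] g :=
    hopen.mono fun t ht => (hfd t ht).deriv
  rw [show (2 : ℕ) = 1 + 1 from rfl, iteratedDeriv_succ, iteratedDeriv_one,
    hderiv_eq.deriv_eq]
  -- compute the derivative of g at 0
  have hN : HasDerivAt
      (fun t => (2 * a * r + 2 * t * m) * Q t - P t * (2 * a * r + 2 * t * (a * c)))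
      ((2 * m) * Q 0 + (2 * a * r + 2 * 0 * m) * (2 * a * r + 2 * 0 * (a * c))
        - ((2 * a * r + 2 * 0 * m) * (2 * a * r + 2 * 0 * (a * c)) + P 0 * (2 * (a * c)))) 0 := by
    exact ((hasDerivAt_lin (2 * a * r) m 0).mul (hasDerivAt_quad (a ^ 2) (2 * a * r) (a * c) 0)).sub
      ((hasDerivAt_quad (a ^ 2) (2 * a * r) m 0).mul (hasDerivAt_lin (2 * a * r) (a * c) 0))
  have hD : HasDerivAt (fun t => Q t ^ 2)
      (↑2 * Q 0 ^ 1 * (2 * a * r + 2 * 0 * (a * c))) 0 :=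
    (hasDerivAt_quad (a ^ 2) (2 * a * r) (a * c) 0).pow 2
  have hD0 : Q 0 ^ 2 ≠ 0 := pow_ne_zero _ hQ0ne
  have hgd := ((hN.div hD hD0)).neg
  rw [show deriv g 0 = _ from hgd.deriv]
  have h4 : ‖φ‖ ^ 4 = a ^ 2 := by rw [ha]; ring
  have hP0 : P 0 = a ^ 2 := by simp [hP]
  rw [h4, hP0, hQ0]
  field_simp
  ring
end

section
/- Let V be a real normed vector space and let F : V × V → ℝ be a contrast function which is moreover nonnegative: F(y,z) ≥ 0 for all y, z ∈ V. Then the induced symmetric bilinear form is positive semidefinite: for every x, u ∈ V, g^F(x)(u,u) = D²F(x,x)((0,u),(0,u)) ≥ 0. -/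
open Set Filter Topology

/-- For a nonnegative contrast function `F` on the pair groupoid `V × V`, the induced
symmetric bilinear form `g^F(x)(u,v) = D²F(x,x)((0,u),(0,v))` is positive semidefinite. -/
theorem contrast_metric_posSemidef
    {V : Type*} [NormedAddCommGroup V] [NormedSpace ℝ V]
    (F : V × V → ℝ) (hF : ContDiff ℝ (⊤ : ℕ∞) F)
    (hF0 : ∀ x : V, F (x, x) = 0) (hdF : ∀ x : V, fderiv ℝ F (x, x) = 0)
    (hnonneg : ∀ y z : V, 0 ≤ F (y, z))
    (x u : V) :
    0 ≤ iteratedFDeriv ℝ 2 F (x, x) ![(0, u), (0, u)] := by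
  rw [iteratedFDeriv_two_apply]
  simp only [Matrix.cons_val_zero, Matrix.cons_val_one, Matrix.head_cons]
  set c : ℝ := fderiv ℝ (fderiv ℝ F) (x, x) (0, u) (0, u) with hc
  have hdiff : Differentiable ℝ F := hF.differentiable (by simp)
  have hgdiff : Differentiable ℝ (fderiv ℝ F) :=
    (hF.fderiv_right (m := 1) (by exact WithTop.coe_le_coe.mpr le_top)).differentiable one_ne_zero
  set L : ℝ → V × V := fun t => (x, x) + t • ((0 : V), u) with hLdef
  have hL : ∀ t : ℝ, HasDerivAt L ((0 : V), u) t := by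
    intro t
    show HasDerivAt (fun s : ℝ => (x, x) + s • ((0 : V), u)) ((0 : V), u) t
    simpa using ((hasDerivAt_id t).smul_const ((0 : V), u)).const_add (x, x)
  have hL0 : L 0 = (x, x) := by simp [hLdef]
  set ψ : ℝ → ℝ := fun t => fderiv ℝ F (L t) (0, u) with hψdef
  set φ : ℝ → ℝ := fun t => F (L t) with hφdef
  have hφ : ∀ t : ℝ, HasDerivAt φ (ψ t) t := fun t =>
    (hdiff (L t)).hasFDerivAt.comp_hasDerivAt t (hL t)
  have hψ0 : ψ 0 = 0 := by simp [hψdef, hL0, hdF x]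
  have hφ0 : φ 0 = 0 := by simp [hφdef, hL0, hF0 x]
  have hφnn : ∀ t : ℝ, 0 ≤ φ t := fun t => hnonneg _ _
  -- ψ has derivative c at 0
  have hgL : HasDerivAt (fun t => fderiv ℝ F (L t)) (fderiv ℝ (fderiv ℝ F) (x, x) (0, u)) 0 := by
    have := (hgdiff (L 0)).hasFDerivAt.comp_hasDerivAt 0 (hL 0)
    rwa [hL0] at this
  have hψ' : HasDerivAt ψ c 0 := by
    have := hgL.clm_apply (hasDerivAt_const (0 : ℝ) ((0 : V), u))
    simpa using this
  -- suppose c < 0; derive a contradiction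
  by_contra hcon
  push_neg at hcon
  have hslope : Tendsto (slope ψ 0) (𝓝[≠] 0) (𝓝 c) :=
    hasDerivAt_iff_tendsto_slope.mp hψ'
  have hev : ∀ᶠ t in 𝓝[≠] (0 : ℝ), slope ψ 0 t < c / 2 :=
    hslope.eventually (gt_mem_nhds (by linarith))
  have hev' : ∀ᶠ t in 𝓝[>] (0 : ℝ), slope ψ 0 t < c / 2 :=
    hev.filter_mono (nhdsWithin_mono 0 (fun t ht => (ne_of_gt ht)))
  obtain ⟨δ, hδpos, hδ⟩ := Metric.mem_nhdsWithin_iff.mp hev'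
  have hneg : ∀ s : ℝ, 0 < s → s < δ → ψ s < 0 := by
    intro s hs hsδ
    have hmem : s ∈ Metric.ball (0 : ℝ) δ ∩ Ioi 0 := by
      constructor
      · simpa [abs_of_pos hs] using hsδ
      · exact hs
    have := hδ hmem
    simp only [mem_setOf_eq, slope_def_field, hψ0, sub_zero] at this
    have h2 : ψ s / s < c / 2 := by simpa [slope, hψ0] using this
    have := (div_lt_iff₀ hs).mp h2
    nlinarith
  set t : ℝ := δ / 2 with ht
  have htpos : 0 < t := by positivity
  obtain ⟨ξ, hξ, hξ'⟩ := exists_hasDerivAt_eq_slope φ ψ htpos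
    (fun s _ => (hφ s).continuousAt.continuousWithinAt)
    (fun s _ => hφ s)
  have hψξ : ψ ξ < 0 := hneg ξ hξ.1 (by linarith [hξ.2])
  rw [hξ'] at hψξ
  have : 0 ≤ (φ t - φ 0) / (t - 0) := by
    rw [hφ0, sub_zero, sub_zero]
    exact div_nonneg (hφnn t) htpos.le
  linarith
end
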